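/- arXiv:2301.06147 — 6 statements merged into one kernel-verified Lean document; each statement's English description precedes it below -/
import Mathlib

section
/- The left semi-tensor product of matrices is associative: if A, B, C are real matrices with dimensions such that the STPs are well defined (column number of each left factor divides or is divided by the row number of the right factor), then (A⋉B)⋉C = A⋉(B⋉C). -/
open Matrix Kronecker

/-- `U ⊗ I_s`, with the product index types flattened to `Fin`s. -/
noncomputable def kronI {m n : ℕ} (s : ℕ) (U : Matrix (Fin m) (Fin n) ℝ) :
    Matrix (Fin (m * s)) (Fin (n * s)) ℝ :=
  Matrix.reindex finProdFinEquiv finProdFinEquiv (U ⊗ₖ (1 : Matrix (Fin s) (Fin s) ℝ))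

/-- The left semi-tensor product of matrices `A ∈ ℝ^{m×s}` and `B ∈ ℝ^{p×q}`:
`A ⋉ B = (A ⊗ I_{t/s})(B ⊗ I_{t/p})` with `t = lcm(s,p)`.  Under the multiple dimension
condition (`p ∣ s` or `s ∣ p`) this is exactly `A (B ⊗ Iₙ)` when `s = n·p`, and
`(A ⊗ Iₙ) B` when `p = n·s`. -/
noncomputable def stp {m s p q : ℕ} (A : Matrix (Fin m) (Fin s) ℝ)
    (B : Matrix (Fin p) (Fin q) ℝ) :
    Matrix (Fin (m * (Nat.lcm s p / s))) (Fin (q * (Nat.lcm s p / p))) ℝ :=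
  kronI (Nat.lcm s p / s) A *
    Matrix.reindex
      (finCongr ((Nat.mul_div_cancel' (Nat.dvd_lcm_right s p)).trans
        (Nat.mul_div_cancel' (Nat.dvd_lcm_left s p)).symm))
      (Equiv.refl _)
      (kronI (Nat.lcm s p / p) B)

noncomputable def kcast {a b a' b' : ℕ} (h1 : a = a') (h2 : b = b')
    (M : Matrix (Fin a) (Fin b) ℝ) : Matrix (Fin a') (Fin b') ℝ :=
  Matrix.reindex (finCongr h1) (finCongr h2) M

lemma kcast_id {a b : ℕ} (h1 : a = a) (h2 : b = b) (M : Matrix (Fin a) (Fin b) ℝ) :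
    kcast h1 h2 M = M := rfl

lemma kcast_apply {a b a' b' : ℕ} (h1 : a = a') (h2 : b = b')
    (M : Matrix (Fin a) (Fin b) ℝ) (i : Fin a') (j : Fin b') :
    kcast h1 h2 M i j = M (Fin.cast h1.symm i) (Fin.cast h2.symm j) := rfl

lemma kcast_kcast {a b a' b' a'' b'' : ℕ} (h1 : a = a') (h2 : b = b')
    (g1 : a' = a'') (g2 : b' = b'') (M : Matrix (Fin a) (Fin b) ℝ) :
    kcast g1 g2 (kcast h1 h2 M) = kcast (h1.trans g1) (h2.trans g2) M := by
  subst h1; subst h2; subst g1; subst g2; rfl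

lemma kcast_heq {a b a' b' : ℕ} (h1 : a = a') (h2 : b = b')
    (M : Matrix (Fin a) (Fin b) ℝ) : HEq (kcast h1 h2 M) M := by
  subst h1; subst h2; rfl

lemma kcast_mul {a b c a' b' c' : ℕ} (h1 : a = a') (h2 : b = b') (h3 : c = c')
    (M : Matrix (Fin a) (Fin b) ℝ) (N : Matrix (Fin b) (Fin c) ℝ) :
    kcast h1 h3 (M * N) = kcast h1 h2 M * kcast h2 h3 N := by
  subst h1; subst h2; subst h3; rfl

lemma stp_def {m s p q : ℕ} (A : Matrix (Fin m) (Fin s) ℝ) (B : Matrix (Fin p) (Fin q) ℝ)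
    (E : p * (Nat.lcm s p / p) = s * (Nat.lcm s p / s)) :
    stp A B = kronI (Nat.lcm s p / s) A * kcast E rfl (kronI (Nat.lcm s p / p) B) := rfl

lemma kronI_mul {a b c : ℕ} (t : ℕ) (U : Matrix (Fin a) (Fin b) ℝ)
    (V : Matrix (Fin b) (Fin c) ℝ) :
    kronI t (U * V) = kronI t U * kronI t V := by
  unfold kronI
  simp only [Matrix.reindex_apply]
  rw [Matrix.submatrix_mul_equiv _ _ _ finProdFinEquiv.symm _]
  rw [← Matrix.mul_kronecker_mul, Matrix.one_mul]

lemma kronI_kcast {a b a' b' : ℕ} (t : ℕ) (h1 : a = a') (h2 : b = b')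
    (M : Matrix (Fin a) (Fin b) ℝ) :
    kronI t (kcast h1 h2 M)
      = kcast (congrArg (· * t) h1) (congrArg (· * t) h2) (kronI t M) := by
  subst h1; subst h2; rfl

lemma kronI_apply {m n : ℕ} (t : ℕ) (U : Matrix (Fin m) (Fin n) ℝ)
    (i : Fin (m * t)) (j : Fin (n * t)) :
    kronI t U i j = if i.modNat = j.modNat then U i.divNat j.divNat else 0 := by
  simp [kronI, Matrix.reindex_apply, Matrix.submatrix_apply, finProdFinEquiv,
    Matrix.kroneckerMap_apply, Matrix.one_apply, mul_ite, mul_one, mul_zero]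

lemma kronI_kronI {m n : ℕ} (r t : ℕ) (U : Matrix (Fin m) (Fin n) ℝ) :
    kronI t (kronI r U)
      = kcast (mul_assoc m r t).symm (mul_assoc n r t).symm (kronI (r * t) U) := by
  ext i j
  have hmt : 0 < m * r * t := i.pos
  have ht : 0 < t := by
    rcases Nat.eq_zero_or_pos t with h | h
    · simp [h] at hmt
    · exact h
  have hr : 0 < r := by
    rcases Nat.eq_zero_or_pos r with h | h
    · simp [h] at hmt
    · exact h
  rw [kronI_apply, kronI_apply, kcast_apply, kronI_apply]
  have d1 : (Fin.cast (mul_assoc m r t).symm.symm i).divNat = i.divNat.divNat := by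
    apply Fin.ext
    simp only [Fin.coe_divNat, Fin.coe_cast]
    rw [Nat.div_div_eq_div_mul, mul_comm t r]
  have d2 : (Fin.cast (mul_assoc n r t).symm.symm j).divNat = j.divNat.divNat := by
    apply Fin.ext
    simp only [Fin.coe_divNat, Fin.coe_cast]
    rw [Nat.div_div_eq_div_mul, mul_comm t r]
  rw [d1, d2]
  have c : (Fin.cast (mul_assoc m r t).symm.symm i).modNat
      = (Fin.cast (mul_assoc n r t).symm.symm j).modNat
      ↔ (i.modNat = j.modNat ∧ i.divNat.modNat = j.divNat.modNat) := by
    simp only [Fin.ext_iff, Fin.coe_modNat, Fin.coe_cast, Fin.coe_divNat]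
    rw [mul_comm r t, Nat.mod_mul, Nat.mod_mul]
    constructor
    · intro h
      have e1 : ((i : ℕ) % t + t * ((i : ℕ) / t % r)) % t = (i : ℕ) % t := by
        rw [Nat.add_mul_mod_self_left, Nat.mod_mod_of_dvd]
        exact dvd_rfl
      have e2 : ((j : ℕ) % t + t * ((j : ℕ) / t % r)) % t = (j : ℕ) % t := by
        rw [Nat.add_mul_mod_self_left, Nat.mod_mod_of_dvd]
        exact dvd_rfl
      have hx : (i : ℕ) % t = (j : ℕ) % t := by rw [← e1, ← e2, h]
      refine ⟨hx, ?_⟩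
      have h2 : t * ((i : ℕ) / t % r) = t * ((j : ℕ) / t % r) := by omega
      exact Nat.eq_of_mul_eq_mul_left ht h2
    · rintro ⟨h1, h2⟩; rw [h1, h2]
  by_cases h1 : i.modNat = j.modNat
  · by_cases h2 : i.divNat.modNat = j.divNat.modNat
    · rw [if_pos h1, if_pos h2, if_pos (c.mpr ⟨h1, h2⟩)]
    · rw [if_pos h1, if_neg h2, if_neg (fun hc => h2 (c.mp hc).2)]
  · rw [if_neg h1, if_neg (fun hc => h1 (c.mp hc).1)]

lemma master (s p q u : ℕ) :
    q * Nat.lcm s (p * (Nat.lcm q u / q)) = p * Nat.lcm (q * (Nat.lcm s p / p)) u := by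
  have hpα : p * (Nat.lcm s p / p) = Nat.lcm s p :=
    Nat.mul_div_cancel' (Nat.dvd_lcm_right s p)
  have hqγ : q * (Nat.lcm q u / q) = Nat.lcm q u :=
    Nat.mul_div_cancel' (Nat.dvd_lcm_left q u)
  calc q * Nat.lcm s (p * (Nat.lcm q u / q))
      = Nat.lcm (q * s) (q * (p * (Nat.lcm q u / q))) := (Nat.lcm_mul_left _ _ _).symm
    _ = Nat.lcm (q * s) (p * (q * (Nat.lcm q u / q))) := by rw [mul_left_comm]
    _ = Nat.lcm (q * s) (p * Nat.lcm q u) := by rw [hqγ]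
    _ = Nat.lcm (q * s) (Nat.lcm (p * q) (p * u)) := by rw [Nat.lcm_mul_left]
    _ = Nat.lcm (Nat.lcm (q * s) (p * q)) (p * u) := (Nat.lcm_assoc _ _ _).symm
    _ = Nat.lcm (Nat.lcm (q * s) (q * p)) (p * u) := by rw [mul_comm p q]
    _ = Nat.lcm (q * Nat.lcm s p) (p * u) := by rw [Nat.lcm_mul_left]
    _ = Nat.lcm (q * (p * (Nat.lcm s p / p))) (p * u) := by rw [hpα]
    _ = Nat.lcm (p * (q * (Nat.lcm s p / p))) (p * u) := by rw [mul_left_comm]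
    _ = p * Nat.lcm (q * (Nat.lcm s p / p)) u := Nat.lcm_mul_left _ _ _

lemma claim1 (s p q u : ℕ) :
    (Nat.lcm s p / s) * (Nat.lcm (q * (Nat.lcm s p / p)) u / (q * (Nat.lcm s p / p)))
      = Nat.lcm s (p * (Nat.lcm q u / q)) / s := by
  rcases Nat.eq_zero_or_pos s with hs | hs
  · subst hs; simp
  rcases Nat.eq_zero_or_pos q with hq | hq
  · subst hq; simp
  have hM := master s p q u
  have hsa : s * (Nat.lcm s p / s) = Nat.lcm s p :=
    Nat.mul_div_cancel' (Nat.dvd_lcm_left s p)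
  have hpa : p * (Nat.lcm s p / p) = Nat.lcm s p :=
    Nat.mul_div_cancel' (Nat.dvd_lcm_right s p)
  have hqb : (q * (Nat.lcm s p / p)) * (Nat.lcm (q * (Nat.lcm s p / p)) u / (q * (Nat.lcm s p / p)))
      = Nat.lcm (q * (Nat.lcm s p / p)) u :=
    Nat.mul_div_cancel' (Nat.dvd_lcm_left _ _)
  have hsd : s * (Nat.lcm s (p * (Nat.lcm q u / q)) / s) = Nat.lcm s (p * (Nat.lcm q u / q)) :=
    Nat.mul_div_cancel' (Nat.dvd_lcm_left _ _)
  set a := Nat.lcm s p / s with ha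
  set a' := Nat.lcm s p / p with ha'
  set b := Nat.lcm (q * a') u / (q * a') with hb
  set g := Nat.lcm q u / q with hg
  set d := Nat.lcm s (p * g) / s with hd
  apply Nat.eq_of_mul_eq_mul_left hq
  apply Nat.eq_of_mul_eq_mul_left hs
  calc s * (q * (a * b))
      = q * ((s * a) * b) := by ring
    _ = q * ((p * a') * b) := by rw [hsa, ← hpa]
    _ = p * ((q * a') * b) := by ring
    _ = p * Nat.lcm (q * a') u := by rw [hqb]
    _ = q * Nat.lcm s (p * g) := hM.symm
    _ = q * (s * d) := by rw [hsd]
    _ = s * (q * d) := by ring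

lemma claim2 (s p q u : ℕ) :
    (Nat.lcm s p / p) * (Nat.lcm (q * (Nat.lcm s p / p)) u / (q * (Nat.lcm s p / p)))
      = (Nat.lcm q u / q) * (Nat.lcm s (p * (Nat.lcm q u / q)) / (p * (Nat.lcm q u / q))) := by
  rcases Nat.eq_zero_or_pos p with hp | hp
  · subst hp; simp
  rcases Nat.eq_zero_or_pos q with hq | hq
  · subst hq; simp
  have hM := master s p q u
  have hpa : p * (Nat.lcm s p / p) = Nat.lcm s p :=
    Nat.mul_div_cancel' (Nat.dvd_lcm_right s p)
  have hqb : (q * (Nat.lcm s p / p)) * (Nat.lcm (q * (Nat.lcm s p / p)) u / (q * (Nat.lcm s p / p)))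
      = Nat.lcm (q * (Nat.lcm s p / p)) u :=
    Nat.mul_div_cancel' (Nat.dvd_lcm_left _ _)
  have hpd : (p * (Nat.lcm q u / q)) * (Nat.lcm s (p * (Nat.lcm q u / q)) / (p * (Nat.lcm q u / q)))
      = Nat.lcm s (p * (Nat.lcm q u / q)) :=
    Nat.mul_div_cancel' (Nat.dvd_lcm_right _ _)
  set a' := Nat.lcm s p / p with ha'
  set b := Nat.lcm (q * a') u / (q * a') with hb
  set g := Nat.lcm q u / q with hg
  set d' := Nat.lcm s (p * g) / (p * g) with hd'
  apply Nat.eq_of_mul_eq_mul_left hq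
  apply Nat.eq_of_mul_eq_mul_left hp
  calc p * (q * (a' * b))
      = p * ((q * a') * b) := by ring
    _ = p * Nat.lcm (q * a') u := by rw [hqb]
    _ = q * Nat.lcm s (p * g) := hM.symm
    _ = q * ((p * g) * d') := by rw [hpd]
    _ = p * (q * (g * d')) := by ring

lemma claim3 (s p q u : ℕ) :
    Nat.lcm (q * (Nat.lcm s p / p)) u / u
      = (Nat.lcm q u / u) * (Nat.lcm s (p * (Nat.lcm q u / q)) / (p * (Nat.lcm q u / q))) := by
  rcases Nat.eq_zero_or_pos u with hu | hu
  · subst hu; simp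
  rcases Nat.eq_zero_or_pos p with hp | hp
  · subst hp; simp
  rcases Nat.eq_zero_or_pos q with hq | hq
  · subst hq; simp
  have hM := master s p q u
  have hqg : q * (Nat.lcm q u / q) = Nat.lcm q u :=
    Nat.mul_div_cancel' (Nat.dvd_lcm_left q u)
  have hug : u * (Nat.lcm q u / u) = Nat.lcm q u :=
    Nat.mul_div_cancel' (Nat.dvd_lcm_right q u)
  have hub : u * (Nat.lcm (q * (Nat.lcm s p / p)) u / u) = Nat.lcm (q * (Nat.lcm s p / p)) u :=
    Nat.mul_div_cancel' (Nat.dvd_lcm_right _ _)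
  have hpd : (p * (Nat.lcm q u / q)) * (Nat.lcm s (p * (Nat.lcm q u / q)) / (p * (Nat.lcm q u / q)))
      = Nat.lcm s (p * (Nat.lcm q u / q)) :=
    Nat.mul_div_cancel' (Nat.dvd_lcm_right _ _)
  have hgpos : 0 < Nat.lcm q u / q :=
    Nat.div_pos (Nat.le_of_dvd (Nat.pos_of_ne_zero (Nat.lcm_ne_zero (by omega) (by omega)))
      (Nat.dvd_lcm_left q u)) hq
  set a' := Nat.lcm s p / p with ha'
  set b' := Nat.lcm (q * a') u / u with hb'
  set g := Nat.lcm q u / q with hg'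
  set g' := Nat.lcm q u / u with hg''
  set d' := Nat.lcm s (p * g) / (p * g) with hd'
  have hpg : 0 < p * g := Nat.mul_pos hp hgpos
  have key : Nat.lcm (q * a') u = Nat.lcm q u * d' := by
    apply Nat.eq_of_mul_eq_mul_left hpg
    calc (p * g) * Nat.lcm (q * a') u
        = g * (p * Nat.lcm (q * a') u) := by ring
      _ = g * (q * Nat.lcm s (p * g)) := by rw [← hM]
      _ = (q * g) * Nat.lcm s (p * g) := by ring
      _ = Nat.lcm q u * Nat.lcm s (p * g) := by rw [hqg]
      _ = Nat.lcm q u * ((p * g) * d') := by rw [hpd]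
      _ = (p * g) * (Nat.lcm q u * d') := by ring
  apply Nat.eq_of_mul_eq_mul_left hu
  calc u * b'
      = Nat.lcm (q * a') u := hub
    _ = Nat.lcm q u * d' := key
    _ = (u * g') * d' := by rw [hug]
    _ = u * (g' * d') := by ring

lemma assemble {n1 n2 n3 n4 n5 n6 r1 r2 r3 : ℕ}
    (X1 : Matrix (Fin n1) (Fin n2) ℝ) (X2 : Matrix (Fin n3) (Fin n4) ℝ)
    (X3 : Matrix (Fin n5) (Fin n6) ℝ)
    (a1 : n1 = r1) (a2 : n2 = r2) (b1 : n3 = r2) (b2 : n4 = r3) (e2 : n5 = r3)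
    (E1 : n3 = n2) (E2 : n5 = n4) :
    kcast a1 a2 X1 * kcast b1 b2 X2 * kcast e2 rfl X3
      = kcast a1 rfl (X1 * kcast E1 rfl X2 * kcast E2 rfl X3) := by
  subst a1; subst a2; subst b2; subst e2; subst E1; rfl

lemma assemble' {n1 n2 n3 n4 n5 n6 r2 r3 r6 : ℕ}
    (X1 : Matrix (Fin n1) (Fin n2) ℝ) (X2 : Matrix (Fin n3) (Fin n4) ℝ)
    (X3 : Matrix (Fin n5) (Fin n6) ℝ)
    (F : r2 = n2) (c1 : n3 = r2) (c2 : n4 = r3) (d1 : n5 = r3) (d2 : n6 = r6)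
    (E1 : n3 = n2) (E2 : n5 = n4) :
    X1 * kcast F rfl (kcast c1 c2 X2 * kcast d1 d2 X3)
      = kcast rfl d2 (X1 * kcast E1 rfl X2 * kcast E2 rfl X3) := by
  subst F; subst c2; subst d2; subst E1; subst E2
  exact (Matrix.mul_assoc X1 X2 X3).symm

lemma canon_congr {m s p q u v : ℕ} (A : Matrix (Fin m) (Fin s) ℝ)
    (B : Matrix (Fin p) (Fin q) ℝ) (C : Matrix (Fin u) (Fin v) ℝ)
    {t1 t2 t3 t1' t2' t3' : ℕ} (h1 : t1 = t1') (h2 : t2 = t2') (h3 : t3 = t3')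
    (E1 : p * t2 = s * t1) (E2 : u * t3 = q * t2)
    (E1' : p * t2' = s * t1') (E2' : u * t3' = q * t2') :
    HEq (kronI t1 A * kcast E1 rfl (kronI t2 B) * kcast E2 rfl (kronI t3 C))
        (kronI t1' A * kcast E1' rfl (kronI t2' B) * kcast E2' rfl (kronI t3' C)) := by
  subst h1; subst h2; subst h3; rfl

/-- the left semi-tensor product of matrices is associative: if `A, B, C`
are real matrices with dimensions such that all the STPs involved are well defined (the
column number of each left factor divides or is divided by the row number of the right
factor), then `(A ⋉ B) ⋉ C = A ⋉ (B ⋉ C)` (as matrices of the same — propositionally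
equal — sizes, hence `HEq`). -/
theorem stp_assoc {m s p q u v : ℕ}
    (A : Matrix (Fin m) (Fin s) ℝ) (B : Matrix (Fin p) (Fin q) ℝ)
    (C : Matrix (Fin u) (Fin v) ℝ)
    (hAB : s ∣ p ∨ p ∣ s)
    (hBC : q ∣ u ∨ u ∣ q)
    (hABC : q * (Nat.lcm s p / p) ∣ u ∨ u ∣ q * (Nat.lcm s p / p))
    (hA_BC : s ∣ p * (Nat.lcm q u / q) ∨ p * (Nat.lcm q u / q) ∣ s) :
    HEq (stp (stp A B) C) (stp A (stp B C)) := by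
  have c1 := claim1 s p q u
  have c2 := claim2 s p q u
  have c3 := claim3 s p q u
  have hsa : s * (Nat.lcm s p / s) = Nat.lcm s p :=
    Nat.mul_div_cancel' (Nat.dvd_lcm_left s p)
  have hpa : p * (Nat.lcm s p / p) = Nat.lcm s p :=
    Nat.mul_div_cancel' (Nat.dvd_lcm_right s p)
  have hqb : (q * (Nat.lcm s p / p)) * (Nat.lcm (q * (Nat.lcm s p / p)) u / (q * (Nat.lcm s p / p)))
      = Nat.lcm (q * (Nat.lcm s p / p)) u :=
    Nat.mul_div_cancel' (Nat.dvd_lcm_left _ _)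
  have hub : u * (Nat.lcm (q * (Nat.lcm s p / p)) u / u) = Nat.lcm (q * (Nat.lcm s p / p)) u :=
    Nat.mul_div_cancel' (Nat.dvd_lcm_right _ _)
  have hqg : q * (Nat.lcm q u / q) = Nat.lcm q u :=
    Nat.mul_div_cancel' (Nat.dvd_lcm_left q u)
  have hug : u * (Nat.lcm q u / u) = Nat.lcm q u :=
    Nat.mul_div_cancel' (Nat.dvd_lcm_right q u)
  have hsd : s * (Nat.lcm s (p * (Nat.lcm q u / q)) / s) = Nat.lcm s (p * (Nat.lcm q u / q)) :=
    Nat.mul_div_cancel' (Nat.dvd_lcm_left _ _)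
  have hpd : (p * (Nat.lcm q u / q)) * (Nat.lcm s (p * (Nat.lcm q u / q)) / (p * (Nat.lcm q u / q)))
      = Nat.lcm s (p * (Nat.lcm q u / q)) :=
    Nat.mul_div_cancel' (Nat.dvd_lcm_right _ _)
  set a := Nat.lcm s p / s with ha
  set a' := Nat.lcm s p / p with ha'
  set b := Nat.lcm (q * a') u / (q * a') with hb
  set b' := Nat.lcm (q * a') u / u with hb'
  set g := Nat.lcm q u / q with hg
  set g' := Nat.lcm q u / u with hg'
  set d := Nat.lcm s (p * g) / s with hd
  set d' := Nat.lcm s (p * g) / (p * g) with hd'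
  have E1o : p * a' = s * a := hpa.trans hsa.symm
  have E2o : u * b' = (q * a') * b := hub.trans hqb.symm
  have Go : u * g' = q * g := hug.trans hqg.symm
  have Fo : (p * g) * d' = s * d := hpd.trans hsd.symm
  have E1c : p * (a' * b) = s * (a * b) := by rw [← mul_assoc, ← mul_assoc, E1o]
  have E2c : u * b' = q * (a' * b) := by rw [E2o, mul_assoc]
  have E1c' : p * (g * d') = s * d := by rw [← mul_assoc, Fo]
  have E2c' : u * (g' * d') = q * (g * d') := by rw [← mul_assoc, ← mul_assoc, Go]
  have hL : stp (stp A B) C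
      = kcast (mul_assoc m a b).symm rfl
          (kronI (a * b) A * kcast E1c rfl (kronI (a' * b) B) * kcast E2c rfl (kronI b' C)) := by
    rw [stp_def (stp A B) C E2o, stp_def A B E1o, kronI_mul, kronI_kcast, kronI_kronI,
      kronI_kronI, kcast_kcast]
    exact assemble _ _ _ _ _ _ _ _ E1c E2c
  have hR : stp A (stp B C)
      = kcast rfl (mul_assoc v g' d').symm
          (kronI d A * kcast E1c' rfl (kronI (g * d') B) * kcast E2c' rfl (kronI (g' * d') C)) := by
    rw [stp_def A (stp B C) Fo, stp_def B C Go, kronI_mul, kronI_kcast, kronI_kronI,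
      kronI_kronI, kcast_kcast]
    exact assemble' _ _ _ _ _ _ _ _ E1c' E2c'
  rw [hL, hR]
  exact (kcast_heq _ _ _).trans
    ((canon_congr A B C c1 c2 c3 E1c E2c E1c' E2c').trans (kcast_heq _ _ _).symm)
end

section
/- Kronecker nearest approximation via rearrangement: let A ∈ ℝ^{m×n} with m = m₁m₂, n = n₁n₂, and let Ã ∈ ℝ^{m₁n₁×m₂n₂} be the rearrangement of A whose ((j−1)m₁+i)-th row is vec(A_{i,j})ᵀ where A_{i,j} is the (i,j) block of size m₂×n₂. If σ̃₁ is the largest singular value of Ã with corresponding singular vectors u, v, then B ∈ ℝ^{m₁×n₁}, C ∈ ℝ^{m₂×n₂} defined by vec(B) = √σ̃₁ u, vec(C) = √σ̃₁ v minimize ‖A − B⊗C‖_F over all B, C of those sizes. -/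
open Matrix Kronecker

/-- Expansion of the squared Frobenius distance. -/
lemma expand_sq {X Y : Type*} [Fintype X] [Fintype Y] (M N : X → Y → ℝ) :
    ∑ i, ∑ j, (M i j - N i j) ^ 2 =
      ∑ i, ∑ j, M i j ^ 2 - 2 * ∑ i, ∑ j, M i j * N i j + ∑ i, ∑ j, N i j ^ 2 := by
  have e : ∀ i j, (M i j - N i j) ^ 2 = M i j ^ 2 - 2 * (M i j * N i j) + N i j ^ 2 :=
    fun i j => by ring
  simp_rw [e, Finset.sum_add_distrib, Finset.sum_sub_distrib, ← Finset.mul_sum]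

/-- Best rank-one approximation via the top singular value/vectors. -/
lemma rank_one_opt {X Y : Type*} [Fintype X] [Fintype Y] (M : Matrix X Y ℝ)
    (σ : ℝ) (u : X → ℝ) (v : Y → ℝ) (hσ : 0 ≤ σ)
    (hu : ∑ x, u x ^ 2 = 1) (hv : ∑ y, v y ^ 2 = 1)
    (hAv : M.mulVec v = σ • u)
    (hmax : ∀ u' v', ∑ x, u' x ^ 2 = 1 → ∑ y, v' y ^ 2 = 1 → u' ⬝ᵥ M.mulVec v' ≤ σ)
    (x : X → ℝ) (y : Y → ℝ) :
    ∑ i, ∑ j, (M i j - σ * u i * v j) ^ 2 ≤ ∑ i, ∑ j, (M i j - x i * y j) ^ 2 := by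
  have hMv : ∀ i, ∑ j, M i j * v j = σ * u i := by
    intro i
    have := congrFun hAv i
    simpa [mulVec, dotProduct] using this
  have key1 : ∑ i, ∑ j, M i j * (σ * u i * v j) = σ ^ 2 := by
    calc ∑ i, ∑ j, M i j * (σ * u i * v j)
        = ∑ i, σ * u i * ∑ j, M i j * v j := by
          refine Finset.sum_congr rfl fun i _ => ?_
          rw [Finset.mul_sum]
          exact Finset.sum_congr rfl fun j _ => by ring
      _ = ∑ i, σ ^ 2 * u i ^ 2 := by
          refine Finset.sum_congr rfl fun i _ => ?_
          rw [hMv]; ring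
      _ = σ ^ 2 := by rw [← Finset.mul_sum, hu, mul_one]
  have key2 : ∑ i, ∑ j, (σ * u i * v j) ^ 2 = σ ^ 2 := by
    calc ∑ i, ∑ j, (σ * u i * v j) ^ 2
        = ∑ i, σ ^ 2 * u i ^ 2 * ∑ j, v j ^ 2 := by
          refine Finset.sum_congr rfl fun i _ => ?_
          rw [Finset.mul_sum]
          exact Finset.sum_congr rfl fun j _ => by ring
      _ = σ ^ 2 := by simp_rw [hv, mul_one]; rw [← Finset.mul_sum, hu, mul_one]
  set t := ∑ i, x i ^ 2 with ht
  set s := ∑ j, y j ^ 2 with hs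
  have htn : 0 ≤ t := Finset.sum_nonneg fun i _ => sq_nonneg _
  have hsn : 0 ≤ s := Finset.sum_nonneg fun j _ => sq_nonneg _
  have inner_le : ∑ i, ∑ j, M i j * (x i * y j) ≤ σ * (Real.sqrt t * Real.sqrt s) := by
    by_cases ht0 : t = 0
    · have hx : ∀ i, x i = 0 := by
        intro i
        have h2 := (Finset.sum_eq_zero_iff_of_nonneg (fun i _ => sq_nonneg (x i))).mp ht0 i
          (Finset.mem_univ i)
        exact pow_eq_zero_iff (by norm_num) |>.mp h2
      simp [hx, ht0]
    · by_cases hs0 : s = 0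
      · have hy : ∀ j, y j = 0 := by
          intro j
          have h2 := (Finset.sum_eq_zero_iff_of_nonneg (fun j _ => sq_nonneg (y j))).mp hs0 j
            (Finset.mem_univ j)
          exact pow_eq_zero_iff (by norm_num) |>.mp h2
        simp [hy, hs0]
      · have htp : 0 < t := lt_of_le_of_ne htn (Ne.symm ht0)
        have hsp : 0 < s := lt_of_le_of_ne hsn (Ne.symm hs0)
        set a := Real.sqrt t with ha
        set b := Real.sqrt s with hb
        have hap : 0 < a := Real.sqrt_pos.mpr htp
        have hbp : 0 < b := Real.sqrt_pos.mpr hsp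
        have ha2 : a ^ 2 = t := Real.sq_sqrt htn
        have hb2 : b ^ 2 = s := Real.sq_sqrt hsn
        have hux : ∑ i, (x i / a) ^ 2 = 1 := by
          simp_rw [div_pow, ← Finset.sum_div, ha2]
          exact div_self ht0
        have hvy : ∑ j, (y j / b) ^ 2 = 1 := by
          simp_rw [div_pow, ← Finset.sum_div, hb2]
          exact div_self hs0
        have h := hmax (fun i => x i / a) (fun j => y j / b) hux hvy
        have heq : (fun i => x i / a) ⬝ᵥ M.mulVec (fun j => y j / b)
            = (∑ i, ∑ j, M i j * (x i * y j)) / (a * b) := by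
          simp only [dotProduct, mulVec, Finset.sum_div]
          refine Finset.sum_congr rfl fun i _ => ?_
          rw [Finset.mul_sum]
          refine Finset.sum_congr rfl fun j _ => ?_
          field_simp
        rw [heq, div_le_iff₀ (by positivity)] at h
        linarith [h]
  have eL : ∑ i, ∑ j, (M i j - σ * u i * v j) ^ 2
      = ∑ i, ∑ j, M i j ^ 2 - σ ^ 2 := by
    rw [expand_sq M (fun i j => σ * u i * v j)]
    rw [key1, key2]; ring
  have eR : ∑ i, ∑ j, (M i j - x i * y j) ^ 2
      = ∑ i, ∑ j, M i j ^ 2 - 2 * ∑ i, ∑ j, M i j * (x i * y j) + t * s := by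
    rw [expand_sq M (fun i j => x i * y j)]
    congr 1
    calc ∑ i, ∑ j, (x i * y j) ^ 2
        = ∑ i, x i ^ 2 * ∑ j, y j ^ 2 := by
          refine Finset.sum_congr rfl fun i _ => ?_
          rw [Finset.mul_sum]
          exact Finset.sum_congr rfl fun j _ => by ring
      _ = t * s := by rw [← Finset.sum_mul]
  rw [eL, eR]
  have hsq : Real.sqrt t * Real.sqrt t = t := Real.mul_self_sqrt htn
  have hsq' : Real.sqrt s * Real.sqrt s = s := Real.mul_self_sqrt hsn
  nlinarith [sq_nonneg (σ - Real.sqrt t * Real.sqrt s), sq_nonneg (Real.sqrt t * Real.sqrt s),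
    inner_le, Real.sqrt_nonneg t, Real.sqrt_nonneg s]

/-- The Frobenius norm of a real matrix. -/
noncomputable def frob {α β : Type*} [Fintype α] [Fintype β] (M : Matrix α β ℝ) : ℝ :=
  Real.sqrt (∑ i, ∑ j, (M i j) ^ 2)

/-- The Van Loan–Pitsianis rearrangement `Ã` of a matrix `A ∈ ℝ^{m₁m₂×n₁n₂}` (rows
indexed by `(i,a) : Fin m₁ × Fin m₂`, columns by `(j,b) : Fin n₁ × Fin n₂`, so the
`(i,j)` block of size `m₂×n₂` is `A_{i,j}(a,b) = A (i,a) (j,b)`): the `((j-1)m₁+i)`-th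
row of `Ã` is `vec(A_{i,j})ᵀ`, where `vec` is column-major. -/
def rearrange {m₁ m₂ n₁ n₂ : ℕ} (A : Matrix (Fin m₁ × Fin m₂) (Fin n₁ × Fin n₂) ℝ) :
    Matrix (Fin n₁ × Fin m₁) (Fin n₂ × Fin m₂) ℝ :=
  Matrix.of fun x y => A (x.2, y.2) (x.1, y.1)

/-- The index shuffle underlying the rearrangement. -/
def shuffle (m₁ m₂ n₁ n₂ : ℕ) :
    ((Fin n₁ × Fin m₁) × (Fin n₂ × Fin m₂)) ≃ ((Fin m₁ × Fin m₂) × (Fin n₁ × Fin n₂)) where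
  toFun r := ((r.1.2, r.2.2), (r.1.1, r.2.1))
  invFun r := ((r.2.1, r.1.1), (r.2.2, r.1.2))
  left_inv _ := rfl
  right_inv _ := rfl

/-- Reindexing double sums along the rearrangement. -/
lemma resum {m₁ m₂ n₁ n₂ : ℕ} (f : (Fin m₁ × Fin m₂) → (Fin n₁ × Fin n₂) → ℝ) :
    ∑ p, ∑ q, f p q =
      ∑ p : Fin n₁ × Fin m₁, ∑ q : Fin n₂ × Fin m₂, f (p.2, q.2) (p.1, q.1) := by
  calc ∑ p, ∑ q, f p q
      = ∑ r : (Fin m₁ × Fin m₂) × (Fin n₁ × Fin n₂), f r.1 r.2 :=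
        (Fintype.sum_prod_type (f := fun r => f r.1 r.2)).symm
    _ = ∑ r : (Fin n₁ × Fin m₁) × (Fin n₂ × Fin m₂), f (r.1.2, r.2.2) (r.1.1, r.2.1) :=
        (Fintype.sum_equiv (shuffle m₁ m₂ n₁ n₂) _ _ (fun r => rfl)).symm
    _ = ∑ p : Fin n₁ × Fin m₁, ∑ q : Fin n₂ × Fin m₂, f (p.2, q.2) (p.1, q.1) :=
        Fintype.sum_prod_type
          (f := fun r : (Fin n₁ × Fin m₁) × (Fin n₂ × Fin m₂) => f (r.1.2, r.2.2) (r.1.1, r.2.1))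

/-- Van Loan–Pitsianis: let `A ∈ ℝ^{m×n}`, `m = m₁m₂`, `n = n₁n₂`, and
let `Ã` be the rearrangement of `A`.  If `σ` is the largest singular value of `Ã` with
corresponding (unit) left and right singular vectors `u, v`, then `B, C` defined by
`vec(B) = √σ u`, `vec(C) = √σ v` (column-major `vec`) minimize `‖A − B ⊗ C‖_F`. -/
theorem kron_nearest {m₁ m₂ n₁ n₂ : ℕ}
    (A : Matrix (Fin m₁ × Fin m₂) (Fin n₁ × Fin n₂) ℝ)
    (σ : ℝ) (u : Fin n₁ × Fin m₁ → ℝ) (v : Fin n₂ × Fin m₂ → ℝ)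
    (hσ : 0 ≤ σ)
    (hu : ∑ x, u x ^ 2 = 1) (hv : ∑ y, v y ^ 2 = 1)
    (hAv : (rearrange A).mulVec v = σ • u)
    (hAu : (rearrange A)ᵀ.mulVec u = σ • v)
    (hmax : ∀ (u' : Fin n₁ × Fin m₁ → ℝ) (v' : Fin n₂ × Fin m₂ → ℝ),
      ∑ x, u' x ^ 2 = 1 → ∑ y, v' y ^ 2 = 1 →
        u' ⬝ᵥ (rearrange A).mulVec v' ≤ σ)
    (B : Matrix (Fin m₁) (Fin n₁) ℝ) (C : Matrix (Fin m₂) (Fin n₂) ℝ)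
    (hB : ∀ i j, B i j = Real.sqrt σ * u (j, i))
    (hC : ∀ a b, C a b = Real.sqrt σ * v (b, a)) :
    ∀ (B' : Matrix (Fin m₁) (Fin n₁) ℝ) (C' : Matrix (Fin m₂) (Fin n₂) ℝ),
      frob (A - B ⊗ₖ C) ≤ frob (A - B' ⊗ₖ C') := by
  intro B' C'
  unfold frob
  apply Real.sqrt_le_sqrt
  have hre : ∀ (B₀ : Matrix (Fin m₁) (Fin n₁) ℝ) (C₀ : Matrix (Fin m₂) (Fin n₂) ℝ),
      ∑ p, ∑ q, ((A - B₀ ⊗ₖ C₀) p q) ^ 2 =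
        ∑ p : Fin n₁ × Fin m₁, ∑ q : Fin n₂ × Fin m₂,
          (rearrange A p q - B₀ p.2 p.1 * C₀ q.2 q.1) ^ 2 := by
    intro B₀ C₀
    rw [resum (fun p q => ((A - B₀ ⊗ₖ C₀) p q) ^ 2)]
    simp [rearrange, kroneckerMap_apply]
  rw [hre B C, hre B' C']
  have hBC : ∀ (p : Fin n₁ × Fin m₁) (q : Fin n₂ × Fin m₂),
      B p.2 p.1 * C q.2 q.1 = σ * u p * v q := by
    intro p q
    rw [hB p.2 p.1, hC q.2 q.1]
    have h := Real.mul_self_sqrt hσ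
    have hp : ((p.1, p.2) : Fin n₁ × Fin m₁) = p := rfl
    have hq : ((q.1, q.2) : Fin n₂ × Fin m₂) = q := rfl
    rw [hp, hq]
    linear_combination u p * v q * h
  simp_rw [hBC]
  exact rank_one_opt (rearrange A) σ u v hσ hu hv hAv hmax
    (fun p => B' p.2 p.1) (fun q => C' q.2 q.1)
end

section
/- The Frobenius norm of the Kronecker approximation residual equals the tail of singular values of the rearranged matrix: with A ∈ ℝ^{n₁×n₂}, factors s₁|n₁, s₂|n₂, and B ∈ ℝ^{(n₁/s₁)×(n₂/s₂)}, C ∈ ℝ^{s₁×s₂} the minimizers of ‖A − B⊗C‖_F, the minimum value is √(Σ_{i=2}^q σ̃ᵢ²), where σ̃₁ ≥ σ̃₂ ≥ ⋯ ≥ σ̃_q are the singular values of the rearranged matrix Ã and q = min{s₁s₂, n₁n₂/(s₁s₂)}. -/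
open Matrix Kronecker

section aux
variable {m n q : Type*} [Fintype m] [Fintype n] [Fintype q] [DecidableEq q]

omit [DecidableEq q] in
lemma dot_self_eq (t : q → ℝ) : t ⬝ᵥ t = ∑ k, t k ^ 2 := by
  simp [dotProduct, sq]

lemma sum_sq_mulVec (P : Matrix m q ℝ) (hP : Pᵀ * P = 1) (t : q → ℝ) :
    ∑ x, ((P *ᵥ t) x) ^ 2 = ∑ k, (t k) ^ 2 := by
  have h1 : (P *ᵥ t) ⬝ᵥ (P *ᵥ t) = t ⬝ᵥ t := by
    rw [Matrix.dotProduct_mulVec, ← Matrix.mulVec_transpose, Matrix.mulVec_mulVec, hP,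
      Matrix.one_mulVec]
  rw [← dot_self_eq, ← dot_self_eq, h1]

lemma sum_sq_transpose_mulVec_le (Q : Matrix n q ℝ) (hQ : Qᵀ * Q = 1) (v : n → ℝ) :
    ∑ k, ((Qᵀ *ᵥ v) k) ^ 2 ≤ ∑ x, (v x) ^ 2 := by
  set z : q → ℝ := Qᵀ *ᵥ v with hz
  set r : n → ℝ := Q *ᵥ z with hr
  have h1 : ∑ x, (r x) ^ 2 = ∑ k, (z k) ^ 2 := sum_sq_mulVec Q hQ z
  have h2 : v ⬝ᵥ r = ∑ k, (z k) ^ 2 := by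
    rw [hr, Matrix.dotProduct_mulVec, ← Matrix.mulVec_transpose, ← hz, dot_self_eq]
  have h3 : (0:ℝ) ≤ ∑ x, (v x - r x) ^ 2 := by positivity
  have h4 : ∑ x, (v x - r x) ^ 2
      = (∑ x, (v x) ^ 2) - 2 * (v ⬝ᵥ r) + ∑ x, (r x) ^ 2 := by
    rw [dotProduct, Finset.mul_sum, ← Finset.sum_sub_distrib, ← Finset.sum_add_distrib]
    exact Finset.sum_congr rfl fun x _ => by ring
  rw [h4, h1, h2] at h3
  linarith

lemma frobSq_eq_trace (N : Matrix m n ℝ) :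
    ∑ i, ∑ j, (N i j) ^ 2 = Matrix.trace (Nᵀ * N) := by
  rw [Matrix.trace, Finset.sum_comm]
  refine Finset.sum_congr rfl fun i _ => ?_
  simp [Matrix.diag, Matrix.mul_apply, sq]

lemma frobSq_svd (P : Matrix m q ℝ) (Q : Matrix n q ℝ) (d : q → ℝ)
    (hP : Pᵀ * P = 1) (hQ : Qᵀ * Q = 1) :
    ∑ i, ∑ j, ((P * Matrix.diagonal d * Qᵀ) i j) ^ 2 = ∑ k, d k ^ 2 := by
  rw [frobSq_eq_trace]
  have h1 : (P * Matrix.diagonal d * Qᵀ)ᵀ * (P * Matrix.diagonal d * Qᵀ)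
      = Q * (Matrix.diagonal d * Matrix.diagonal d) * Qᵀ := by
    simp only [Matrix.transpose_mul, Matrix.transpose_transpose, Matrix.diagonal_transpose,
      Matrix.mul_assoc]
    rw [← Matrix.mul_assoc Pᵀ P, hP, Matrix.one_mul]
  rw [h1, Matrix.trace_mul_comm, ← Matrix.mul_assoc, hQ, Matrix.one_mul,
    Matrix.diagonal_mul_diagonal, Matrix.trace_diagonal]
  exact Finset.sum_congr rfl fun k _ => (sq (d k)).symm

lemma expand_frobSq (M : Matrix m n ℝ) (u : m → ℝ) (v : n → ℝ) :
    ∑ i, ∑ j, (M i j - u i * v j) ^ 2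
      = (∑ i, ∑ j, (M i j) ^ 2) - 2 * (∑ i, u i * (M *ᵥ v) i)
        + (∑ i, u i ^ 2) * (∑ j, v j ^ 2) := by
  have h2 : ∑ i, u i * (M *ᵥ v) i = ∑ i, ∑ j, u i * (M i j * v j) := by
    simp [Matrix.mulVec, dotProduct, Finset.mul_sum]
  rw [h2, Finset.sum_mul_sum, Finset.mul_sum, ← Finset.sum_sub_distrib,
    ← Finset.sum_add_distrib]
  refine Finset.sum_congr rfl fun i _ => ?_
  rw [Finset.mul_sum, ← Finset.sum_sub_distrib, ← Finset.sum_add_distrib]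
  refine Finset.sum_congr rfl fun j _ => by ring

lemma lower_core (P : Matrix m q ℝ) (Q : Matrix n q ℝ) (σ : q → ℝ) (i₀ : q)
    (hP : Pᵀ * P = 1) (hQ : Qᵀ * Q = 1)
    (hσtop : ∀ k, σ k ≤ σ i₀) (hσ0 : ∀ k, 0 ≤ σ k)
    (u : m → ℝ) (v : n → ℝ) :
    (∑ k, σ k ^ 2) - σ i₀ ^ 2 ≤
      ∑ i, ∑ j, ((P * Matrix.diagonal σ * Qᵀ) i j - u i * v j) ^ 2 := by
  set M := P * Matrix.diagonal σ * Qᵀ with hM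
  set w : m → ℝ := M *ᵥ v with hw
  set U := ∑ i, u i ^ 2 with hU
  set V := ∑ j, v j ^ 2 with hV
  set W := ∑ i, w i ^ 2 with hWdef
  set T := ∑ i, u i * w i with hT
  have hS : ∑ i, ∑ j, (M i j) ^ 2 = ∑ k, σ k ^ 2 := frobSq_svd P Q σ hP hQ
  have hexp : ∑ i, ∑ j, (M i j - u i * v j) ^ 2 = (∑ k, σ k ^ 2) - 2 * T + U * V := by
    rw [expand_frobSq, hS]
  -- bound on W
  have hWle : W ≤ σ i₀ ^ 2 * V := by
    set z : q → ℝ := Qᵀ *ᵥ v with hz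
    have hw2 : w = P *ᵥ (Matrix.diagonal σ *ᵥ z) := by
      rw [hw, hz, Matrix.mulVec_mulVec, Matrix.mulVec_mulVec, hM]
    have h1 : W = ∑ k, ((Matrix.diagonal σ *ᵥ z) k) ^ 2 := by
      rw [hWdef, hw2, sum_sq_mulVec P hP]
    have h2 : ∀ k, ((Matrix.diagonal σ *ᵥ z) k) ^ 2 ≤ σ i₀ ^ 2 * z k ^ 2 := by
      intro k
      rw [Matrix.mulVec_diagonal, mul_pow]
      have := sq_le_sq' (by linarith [hσ0 k, hσtop k]) (hσtop k)
      exact mul_le_mul_of_nonneg_right this (sq_nonneg _)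
    have h3 : ∑ k, (z k) ^ 2 ≤ V := sum_sq_transpose_mulVec_le Q hQ v
    calc W ≤ ∑ k, σ i₀ ^ 2 * z k ^ 2 := by rw [h1]; exact Finset.sum_le_sum fun k _ => h2 k
      _ = σ i₀ ^ 2 * ∑ k, z k ^ 2 := by rw [Finset.mul_sum]
      _ ≤ σ i₀ ^ 2 * V := mul_le_mul_of_nonneg_left h3 (sq_nonneg _)
  have hV0 : 0 ≤ V := by positivity
  have hU0 : 0 ≤ U := by positivity
  rw [hexp]
  rcases eq_or_lt_of_le hV0 with hVz | hVpos
  · -- V = 0 : v ≡ 0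
    have hvz : ∀ j, v j = 0 := by
      intro j
      have := Finset.sum_eq_zero_iff_of_nonneg (fun j _ => sq_nonneg (v j)) |>.mp hVz.symm
      exact pow_eq_zero_iff (n := 2) (by norm_num) |>.mp (this j (Finset.mem_univ j))
    have hwz : ∀ i, w i = 0 := by
      intro i
      rw [hw, Matrix.mulVec, dotProduct]
      exact Finset.sum_eq_zero fun j _ => by rw [hvz j, mul_zero]
    have hTz : T = 0 := by
      rw [hT]; exact Finset.sum_eq_zero fun i _ => by rw [hwz i, mul_zero]
    rw [hTz, ← hVz]
    nlinarith [sq_nonneg (σ i₀)]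
  · -- V > 0
    have hkey : 0 ≤ ∑ i, (V * u i - w i) ^ 2 := by positivity
    have hkey2 : ∑ i, (V * u i - w i) ^ 2 = V ^ 2 * U - 2 * V * T + W := by
      rw [hU, hT, hWdef, Finset.mul_sum, Finset.mul_sum, ← Finset.sum_sub_distrib,
        ← Finset.sum_add_distrib]
      exact Finset.sum_congr rfl fun i _ => by ring
    rw [hkey2] at hkey
    -- 2*V*T ≤ V^2*U + W ≤ V^2*U + σ₀²*V, divide by V
    have h2T : 2 * T ≤ V * U + σ i₀ ^ 2 := by
      have hmul : 2 * T * V ≤ (V * U + σ i₀ ^ 2) * V := by nlinarith [hkey, hWle]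
      exact le_of_mul_le_mul_right hmul hVpos
    nlinarith [h2T]

end aux

def rearrangeEquiv (p₁ s₁ p₂ s₂ : ℕ) :
    ((Fin p₁ × Fin s₁) × (Fin p₂ × Fin s₂)) ≃ ((Fin p₂ × Fin p₁) × (Fin s₂ × Fin s₁)) where
  toFun z := ((z.2.1, z.1.1), (z.2.2, z.1.2))
  invFun x := ((x.1.2, x.2.2), (x.1.1, x.2.1))
  left_inv z := rfl
  right_inv x := rfl

lemma rearrange_sum_sq {p₁ s₁ p₂ s₂ : ℕ} (X : Matrix (Fin p₁ × Fin s₁) (Fin p₂ × Fin s₂) ℝ) :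
    ∑ i, ∑ j, (X i j) ^ 2 = ∑ x, ∑ y, (rearrange X x y) ^ 2 := by
  have l1 : ∑ z : (Fin p₁ × Fin s₁) × (Fin p₂ × Fin s₂), (X z.1 z.2) ^ 2
      = ∑ i, ∑ j, (X i j) ^ 2 := Fintype.sum_prod_type _
  have l2 : ∑ z : (Fin p₂ × Fin p₁) × (Fin s₂ × Fin s₁), (rearrange X z.1 z.2) ^ 2
      = ∑ x, ∑ y, (rearrange X x y) ^ 2 := Fintype.sum_prod_type _
  rw [← l1, ← l2]
  exact Fintype.sum_equiv (rearrangeEquiv p₁ s₁ p₂ s₂) _ _ (fun z => rfl)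

/-- the minimum of `‖A − B ⊗ C‖_F` over `B ∈ ℝ^{(n₁/s₁)×(n₂/s₂)}`,
`C ∈ ℝ^{s₁×s₂}` equals `√(∑_{i=2}^q σ̃ᵢ²)`, where `σ̃₁ ≥ ⋯ ≥ σ̃_q ≥ 0` are the singular
values of the rearrangement `Ã` of `A` (given here by a thin SVD
`Ã = P diag(σ̃) Qᵀ` with `PᵀP = QᵀQ = I`) and `q = min{s₁s₂, n₁n₂/(s₁s₂)}`.
`A ∈ ℝ^{n₁×n₂}` is indexed blockwise, `p₁ = n₁/s₁`, `p₂ = n₂/s₂`. -/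
theorem kron_approx_error {p₁ s₁ p₂ s₂ : ℕ}
    (A : Matrix (Fin p₁ × Fin s₁) (Fin p₂ × Fin s₂) ℝ)
    (σ : Fin (min (s₁ * s₂) (p₁ * p₂)) → ℝ)
    (P : Matrix (Fin p₂ × Fin p₁) (Fin (min (s₁ * s₂) (p₁ * p₂))) ℝ)
    (Q : Matrix (Fin s₂ × Fin s₁) (Fin (min (s₁ * s₂) (p₁ * p₂))) ℝ)
    (hP : Pᵀ * P = 1) (hQ : Qᵀ * Q = 1)
    (hσ : Antitone σ) (hσ0 : ∀ i, 0 ≤ σ i)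
    (hA : rearrange A = P * Matrix.diagonal σ * Qᵀ) :
    IsLeast
      {x : ℝ | ∃ (B : Matrix (Fin p₁) (Fin p₂) ℝ) (C : Matrix (Fin s₁) (Fin s₂) ℝ),
        x = frob (A - B ⊗ₖ C)}
      (Real.sqrt (∑ i ∈ Finset.univ.filter
        (fun i : Fin (min (s₁ * s₂) (p₁ * p₂)) => (i : ℕ) ≠ 0), σ i ^ 2)) := by
  have key : ∀ (B : Matrix (Fin p₁) (Fin p₂) ℝ) (C : Matrix (Fin s₁) (Fin s₂) ℝ),
      frob (A - B ⊗ₖ C)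
        = Real.sqrt (∑ x, ∑ y, (rearrange A x y - B x.2 x.1 * C y.2 y.1) ^ 2) := by
    intro B C
    rw [frob, rearrange_sum_sq]
    congr 1
  have entry : ∀ (d : Fin (min (s₁ * s₂) (p₁ * p₂)) → ℝ) x y,
      (P * Matrix.diagonal d * Qᵀ) x y = ∑ k, P x k * d k * Q y k := by
    intro d x y
    rw [Matrix.mul_apply]
    exact Finset.sum_congr rfl fun k _ => by rw [Matrix.mul_diagonal, Matrix.transpose_apply]
  constructor
  · -- membership
    rcases isEmpty_or_nonempty (Fin (min (s₁ * s₂) (p₁ * p₂))) with h | h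
    · refine ⟨0, 0, ?_⟩
      have h0 : (0 : Matrix (Fin p₁) (Fin p₂) ℝ) ⊗ₖ (0 : Matrix (Fin s₁) (Fin s₂) ℝ) = 0 := by
        ext i j; simp
      rw [h0, sub_zero, frob, rearrange_sum_sq A, hA, frobSq_svd P Q σ hP hQ]
      congr 1
      rw [Finset.univ_eq_empty]
      simp
    · have hpos : 0 < min (s₁ * s₂) (p₁ * p₂) := Fin.pos_iff_nonempty.mpr h
      set i₀ : Fin (min (s₁ * s₂) (p₁ * p₂)) := ⟨0, hpos⟩ with hi₀
      set σ' : Fin (min (s₁ * s₂) (p₁ * p₂)) → ℝ := fun k => if k = i₀ then 0 else σ k with hσ'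
      refine ⟨Matrix.of fun i j => σ i₀ * P (j, i) i₀, Matrix.of fun a b => Q (b, a) i₀, ?_⟩
      rw [key]
      have hdiff : ∀ x y, rearrange A x y
          - (Matrix.of fun i j => σ i₀ * P (j, i) i₀) x.2 x.1
            * (Matrix.of fun a b => Q (b, a) i₀) y.2 y.1
          = (P * Matrix.diagonal σ' * Qᵀ) x y := by
        intro x y
        rw [hA, entry, entry]
        have : ∑ k, P x k * σ' k * Q y k
            = ∑ k, (P x k * σ k * Q y k - if k = i₀ then σ i₀ * P x i₀ * Q y i₀ else 0) := by
          refine Finset.sum_congr rfl fun k _ => ?_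
          by_cases hk : k = i₀
          · rw [hk, show σ' i₀ = 0 from by simp [hσ'], if_pos rfl]
            ring
          · rw [show σ' k = σ k from by simp [hσ', hk], if_neg hk, sub_zero]
        rw [this, Finset.sum_sub_distrib, Finset.sum_ite_eq' Finset.univ i₀]
        simp only [Finset.mem_univ, if_true, Matrix.of_apply]
      have hsum : ∑ x, ∑ y, (rearrange A x y
          - (Matrix.of fun i j => σ i₀ * P (j, i) i₀) x.2 x.1
            * (Matrix.of fun a b => Q (b, a) i₀) y.2 y.1) ^ 2 = ∑ k, σ' k ^ 2 := by
        rw [← frobSq_svd P Q σ' hP hQ]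
        exact Finset.sum_congr rfl fun x _ => Finset.sum_congr rfl fun y _ => by
          rw [hdiff x y]
      rw [hsum]
      congr 1
      rw [Finset.sum_filter]
      refine Finset.sum_congr rfl fun k _ => ?_
      by_cases hk : (k : ℕ) = 0
      · have : k = i₀ := Fin.ext hk
        simp [hσ', this, hk, hi₀]
      · have : k ≠ i₀ := fun hc => hk (by rw [hc])
        simp [hσ', this, hk]
  · -- lower bound
    rintro x ⟨B, C, rfl⟩
    rw [key]
    apply Real.sqrt_le_sqrt
    rcases isEmpty_or_nonempty (Fin (min (s₁ * s₂) (p₁ * p₂))) with h | h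
    · rw [Finset.univ_eq_empty, Finset.filter_empty, Finset.sum_empty]
      positivity
    · have hpos : 0 < min (s₁ * s₂) (p₁ * p₂) := Fin.pos_iff_nonempty.mpr h
      set i₀ : Fin (min (s₁ * s₂) (p₁ * p₂)) := ⟨0, hpos⟩ with hi₀
      have hfil : ∑ i ∈ Finset.univ.filter
          (fun i : Fin (min (s₁ * s₂) (p₁ * p₂)) => (i : ℕ) ≠ 0), σ i ^ 2
          = (∑ k, σ k ^ 2) - σ i₀ ^ 2 := by
        have hsplit := Finset.sum_filter_add_sum_filter_not Finset.univ
          (fun i : Fin (min (s₁ * s₂) (p₁ * p₂)) => (i : ℕ) ≠ 0) (fun i => σ i ^ 2)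
        have hneg : Finset.univ.filter
            (fun i : Fin (min (s₁ * s₂) (p₁ * p₂)) => ¬ (i : ℕ) ≠ 0) = {i₀} := by
          ext k
          simp [Fin.ext_iff, hi₀]
        rw [hneg, Finset.sum_singleton] at hsplit
        linarith
      rw [hfil]
      have htop : ∀ k, σ k ≤ σ i₀ := fun k => hσ (by rw [Fin.le_def]; exact Nat.zero_le _)
      have := lower_core P Q σ i₀ hP hQ htop hσ0 (fun x => B x.2 x.1) (fun y => C y.2 y.1)
      calc (∑ k, σ k ^ 2) - σ i₀ ^ 2
          ≤ ∑ i, ∑ j, ((P * Matrix.diagonal σ * Qᵀ) i j - B i.2 i.1 * C j.2 j.1) ^ 2 := this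
        _ = _ := by rw [← hA]
end

section
/- SVD-STP existence: let A ∈ ℝ^{n₁×n₂} with s₁|n₁, s₂|n₂. There exist orthogonal matrices U ∈ ℝ^{(n₁/s₁)×(n₁/s₁)}, V ∈ ℝ^{(n₂/s₂)×(n₂/s₂)} and a rectangular block-diagonal matrix Σ = blkdiag(S₁,…,S_p) ∈ ℝ^{n₁×n₂} with blocks Sₖ ∈ ℝ^{s₁×s₂} satisfying ‖S₁‖_F ≥ ⋯ ≥ ‖S_p‖_F (p = min{n₁/s₁, n₂/s₂}) such that A = U⋉Σ⋉Vᵀ + E₁ where ‖E₁‖_F = min_{B,C} ‖A − B⊗C‖_F over B ∈ ℝ^{(n₁/s₁)×(n₂/s₂)}, C ∈ ℝ^{s₁×s₂}. -/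
open Matrix Kronecker

/-- The rectangular block-diagonal matrix `blkdiag(S₁,…,S_p) ∈ ℝ^{p₁s₁×p₂s₂}` obtained by
aligning the `s₁×s₂` blocks `S₁,…,S_p` along the diagonal (all other blocks zero). -/
noncomputable def blkdiag {s₁ s₂ : ℕ} (p₁ p₂ p : ℕ)
    (S : Fin p → Matrix (Fin s₁) (Fin s₂) ℝ) :
    Matrix (Fin p₁ × Fin s₁) (Fin p₂ × Fin s₂) ℝ :=
  Matrix.of fun x y =>
    if h : (x.1 : ℕ) = (y.1 : ℕ) ∧ (x.1 : ℕ) < p then S ⟨x.1, h.2⟩ x.2 y.2 else 0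

namespace SvdStp

variable {α β γ δ : Type*} [Fintype α] [Fintype β] [Fintype γ] [Fintype δ]

noncomputable def toE (M : Matrix α β ℝ) : EuclideanSpace ℝ (α × β) :=
  (WithLp.equiv 2 _).symm (fun p => M p.1 p.2)

lemma frob_eq_norm (M : Matrix α β ℝ) : frob M = ‖toE M‖ := by
  rw [EuclideanSpace.norm_eq, frob, Fintype.sum_prod_type]
  congr 1
  refine Finset.sum_congr rfl fun a _ => Finset.sum_congr rfl fun b _ => ?_
  simp [toE, sq_abs]

lemma frob_nonneg (M : Matrix α β ℝ) : 0 ≤ frob M := Real.sqrt_nonneg _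

lemma frob_add_le (X Y : Matrix α β ℝ) : frob (X + Y) ≤ frob X + frob Y := by
  rw [frob_eq_norm, frob_eq_norm, frob_eq_norm]
  exact norm_add_le (toE X) (toE Y)

lemma frob_neg (X : Matrix α β ℝ) : frob (-X) = frob X := by
  rw [frob_eq_norm, frob_eq_norm]; exact norm_neg (toE X)

lemma frob_smul (c : ℝ) (X : Matrix α β ℝ) : frob (c • X) = |c| * frob X := by
  rw [frob_eq_norm, frob_eq_norm]
  have : toE (c • X) = c • toE X := rfl
  rw [this, norm_smul, Real.norm_eq_abs]

lemma frob_eq_zero_iff (X : Matrix α β ℝ) : frob X = 0 ↔ X = 0 := by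
  rw [frob_eq_norm, norm_eq_zero]
  constructor
  · intro h; ext i j
    have := congrArg (fun v => v (i, j)) h
    simpa [toE] using this
  · rintro rfl; rfl

lemma entry_le_frob (X : Matrix α β ℝ) (i : α) (j : β) : |X i j| ≤ frob X := by
  rw [frob]
  rw [← Real.sqrt_sq_eq_abs]
  apply Real.sqrt_le_sqrt
  calc X i j ^ 2 ≤ ∑ b, (X i b)^2 :=
        Finset.single_le_sum (f := fun b => (X i b)^2) (fun b _ => sq_nonneg _) (Finset.mem_univ j)
    _ ≤ ∑ a, ∑ b, (X a b)^2 :=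
        Finset.single_le_sum (f := fun a => ∑ b, (X a b)^2)
          (fun a _ => Finset.sum_nonneg fun b _ => sq_nonneg _) (Finset.mem_univ i)

lemma frob_kronecker (B : Matrix α β ℝ) (C : Matrix γ δ ℝ) :
    frob (B ⊗ₖ C) = frob B * frob C := by
  rw [frob, frob, frob, ← Real.sqrt_mul (by positivity)]
  congr 1
  rw [Fintype.sum_prod_type]
  rw [Finset.sum_mul_sum]
  refine Finset.sum_congr rfl fun i _ => Finset.sum_congr rfl fun y _ => ?_
  rw [Fintype.sum_prod_type, Finset.sum_mul_sum]
  exact Finset.sum_congr rfl fun a _ => Finset.sum_congr rfl fun b _ => by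
    simp [kroneckerMap_apply, mul_pow]


lemma exists_min_kron {p₁ s₁ p₂ s₂ : ℕ} (A : Matrix (Fin p₁ × Fin s₁) (Fin p₂ × Fin s₂) ℝ) :
    ∃ (B₀ : Matrix (Fin p₁) (Fin p₂) ℝ) (C₀ : Matrix (Fin s₁) (Fin s₂) ℝ),
      ∀ B C, frob (A - B₀ ⊗ₖ C₀) ≤ frob (A - B ⊗ₖ C) := by
  set r : ℝ := Real.sqrt (2 * frob A) with hr
  have hr0 : 0 ≤ r := Real.sqrt_nonneg _
  set K₁ : Set (Matrix (Fin p₁) (Fin p₂) ℝ) :=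
    Set.pi Set.univ fun _ => Set.pi Set.univ fun _ => Set.Icc (-r) r with hK₁def
  set K₂ : Set (Matrix (Fin s₁) (Fin s₂) ℝ) :=
    Set.pi Set.univ fun _ => Set.pi Set.univ fun _ => Set.Icc (-r) r with hK₂def
  have hK : IsCompact (K₁ ×ˢ K₂) :=
    (isCompact_univ_pi fun _ => isCompact_univ_pi fun _ => isCompact_Icc).prod
      (isCompact_univ_pi fun _ => isCompact_univ_pi fun _ => isCompact_Icc)
  have hmem_iff₁ : ∀ M : Matrix (Fin p₁) (Fin p₂) ℝ, M ∈ K₁ ↔ ∀ i j, |M i j| ≤ r := by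
    intro M
    simp only [hK₁def, Set.mem_univ_pi, Set.mem_Icc, abs_le]
    exact ⟨fun h i j => h i trivial j trivial, fun h i _ j _ => h i j⟩
  have hmem_iff₂ : ∀ M : Matrix (Fin s₁) (Fin s₂) ℝ, M ∈ K₂ ↔ ∀ i j, |M i j| ≤ r := by
    intro M
    simp only [hK₂def, Set.mem_univ_pi, Set.mem_Icc, abs_le]
    exact ⟨fun h i j => h i trivial j trivial, fun h i _ j _ => h i j⟩
  have h0mem : ((0, 0) : Matrix (Fin p₁) (Fin p₂) ℝ × Matrix (Fin s₁) (Fin s₂) ℝ) ∈ K₁ ×ˢ K₂ := by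
    constructor
    · rw [hmem_iff₁]; intro i j; simpa using hr0
    · rw [hmem_iff₂]; intro i j; simpa using hr0
  have hg : Continuous fun q : Matrix (Fin p₁) (Fin p₂) ℝ × Matrix (Fin s₁) (Fin s₂) ℝ =>
      frob (A - q.1 ⊗ₖ q.2) := by
    unfold frob
    apply Real.continuous_sqrt.comp
    apply continuous_finset_sum; intro x _
    apply continuous_finset_sum; intro y _
    simp only [Matrix.sub_apply, kroneckerMap_apply]
    have c1 : Continuous fun q : Matrix (Fin p₁) (Fin p₂) ℝ × Matrix (Fin s₁) (Fin s₂) ℝ =>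
        q.1 x.1 y.1 := (continuous_apply y.1).comp ((continuous_apply x.1).comp continuous_fst)
    have c2 : Continuous fun q : Matrix (Fin p₁) (Fin p₂) ℝ × Matrix (Fin s₁) (Fin s₂) ℝ =>
        q.2 x.2 y.2 := (continuous_apply y.2).comp ((continuous_apply x.2).comp continuous_snd)
    exact (continuous_const.sub (c1.mul c2)).pow 2
  obtain ⟨q₀, hq₀K, hq₀⟩ := hK.exists_isMinOn ⟨(0,0), h0mem⟩ hg.continuousOn
  refine ⟨q₀.1, q₀.2, fun B C => ?_⟩
  have hmin : ∀ q ∈ K₁ ×ˢ K₂, frob (A - q₀.1 ⊗ₖ q₀.2) ≤ frob (A - q.1 ⊗ₖ q.2) :=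
    fun q hq => isMinOn_iff.mp hq₀ q hq
  have h00 : frob (A - (0 : Matrix (Fin p₁) (Fin p₂) ℝ) ⊗ₖ (0 : Matrix (Fin s₁) (Fin s₂) ℝ)) =
      frob A := by
    rw [Matrix.zero_kronecker, sub_zero]
  rcases le_or_gt (frob A) (frob (A - B ⊗ₖ C)) with h | h
  · calc frob (A - q₀.1 ⊗ₖ q₀.2) ≤ _ := hmin (0, 0) h0mem
      _ = frob A := h00
      _ ≤ _ := h
  · have hbc : frob (B ⊗ₖ C) ≤ 2 * frob A := by
      have e1 : B ⊗ₖ C = -(A - B ⊗ₖ C) + A := by abel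
      calc frob (B ⊗ₖ C) = frob (-(A - B ⊗ₖ C) + A) := by rw [← e1]
        _ ≤ frob (-(A - B ⊗ₖ C)) + frob A := frob_add_le _ _
        _ = frob (A - B ⊗ₖ C) + frob A := by rw [frob_neg]
        _ ≤ frob A + frob A := by linarith
        _ = 2 * frob A := by ring
    by_cases hbc0 : frob B * frob C = 0
    · have hz : B ⊗ₖ C = 0 := by rw [← frob_eq_zero_iff, frob_kronecker]; exact hbc0
      calc frob (A - q₀.1 ⊗ₖ q₀.2) ≤ _ := hmin (0, 0) h0mem
        _ = frob A := h00
        _ = frob (A - B ⊗ₖ C) := by rw [hz, sub_zero]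
    · have hB0 : 0 < frob B :=
        lt_of_le_of_ne (frob_nonneg B) (fun hh => hbc0 (by rw [← hh]; ring))
      have hC0 : 0 < frob C :=
        lt_of_le_of_ne (frob_nonneg C) (fun hh => hbc0 (by rw [← hh]; ring))
      set t := Real.sqrt (frob C / frob B) with htdef
      have ht : 0 < t := Real.sqrt_pos.2 (div_pos hC0 hB0)
      have hkr : (t • B) ⊗ₖ (t⁻¹ • C) = B ⊗ₖ C := by
        rw [Matrix.smul_kronecker, Matrix.kronecker_smul, smul_smul,
          mul_inv_cancel₀ ht.ne', one_smul]
      have hsq : Real.sqrt (frob B * frob C) ≤ r := by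
        rw [hr]
        apply Real.sqrt_le_sqrt
        rw [← frob_kronecker]; exact hbc
      have hfB : frob (t • B) = Real.sqrt (frob B * frob C) := by
        rw [frob_smul, abs_of_pos ht, htdef,
          show frob B = Real.sqrt ((frob B) ^ 2) from (Real.sqrt_sq hB0.le).symm,
          ← Real.sqrt_mul (by positivity)]
        congr 1
        field_simp
        simp only [Real.sqrt_sq hB0.le] <;> ring
      have hfC : frob (t⁻¹ • C) = Real.sqrt (frob B * frob C) := by
        rw [frob_smul, abs_of_pos (inv_pos.2 ht), htdef, ← Real.sqrt_inv, inv_div,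
          show frob C = Real.sqrt ((frob C) ^ 2) from (Real.sqrt_sq hC0.le).symm,
          ← Real.sqrt_mul (by positivity)]
        congr 1
        field_simp
        simp only [Real.sqrt_sq hC0.le] <;> ring
      have hmemBC : ((t • B, t⁻¹ • C) : Matrix (Fin p₁) (Fin p₂) ℝ ×
          Matrix (Fin s₁) (Fin s₂) ℝ) ∈ K₁ ×ˢ K₂ := by
        constructor
        · rw [hmem_iff₁]; intro i j
          exact le_trans (entry_le_frob _ i j) (by rw [hfB]; exact hsq)
        · rw [hmem_iff₂]; intro i j
          exact le_trans (entry_le_frob _ i j) (by rw [hfC]; exact hsq)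
      calc frob (A - q₀.1 ⊗ₖ q₀.2) ≤ _ := hmin _ hmemBC
        _ = frob (A - B ⊗ₖ C) := by rw [hkr]


set_option maxHeartbeats 2000000 in

lemma svd_exists {p₁ p₂ : ℕ} (B : Matrix (Fin p₁) (Fin p₂) ℝ) :
    ∃ (U : Matrix (Fin p₁) (Fin p₁) ℝ) (V : Matrix (Fin p₂) (Fin p₂) ℝ)
      (d : Fin (min p₁ p₂) → ℝ),
      Uᵀ * U = 1 ∧ Vᵀ * V = 1 ∧ Antitone d ∧ (∀ k, 0 ≤ d k) ∧
      (∀ i j, B i j = ∑ k, d k * U i (Fin.castLE (min_le_left p₁ p₂) k)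
          * V j (Fin.castLE (min_le_right p₁ p₂) k)) := by
  classical
  have hBt : Bᴴ = Bᵀ := by ext i j; simp [conjTranspose_apply]
  have hPSD : (Bᵀ * B).PosSemidef := by
    have := Matrix.posSemidef_conjTranspose_mul_self B
    rwa [hBt] at this
  have hG : (Bᵀ * B).IsHermitian := hPSD.1
  set σ : Equiv.Perm (Fin p₂) := Tuple.sort (fun j => -hG.eigenvalues j) with hσ
  set μ : Fin p₂ → ℝ := fun k => hG.eigenvalues (σ k) with hμ
  have hμ0 : ∀ k, 0 ≤ μ k := fun k => hPSD.eigenvalues_nonneg _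
  have hμanti : Antitone μ := by
    intro k l hkl
    have h := Tuple.monotone_sort (fun j => -hG.eigenvalues j) hkl
    simp only [Function.comp_apply] at h
    simp only [hμ]
    linarith
  set bV : OrthonormalBasis (Fin p₂) ℝ (EuclideanSpace ℝ (Fin p₂)) :=
    hG.eigenvectorBasis.reindex σ.symm with hbV
  have hbVapp : ∀ k, bV k = hG.eigenvectorBasis (σ k) := by
    intro k; simp [hbV]
  set V : Matrix (Fin p₂) (Fin p₂) ℝ := Matrix.of fun j k => bV k j with hV
  have horthV : ∀ k l, ∑ j, V j k * V j l = if k = l then (1:ℝ) else 0 := by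
    intro k l
    have h := orthonormal_iff_ite.mp bV.orthonormal k l
    rw [PiLp.inner_apply] at h
    simpa [RCLike.inner_apply, hV, mul_comm] using h
  have hVV : Vᵀ * V = 1 := by
    ext k l
    rw [Matrix.mul_apply]
    simp only [transpose_apply]
    rw [horthV k l, Matrix.one_apply]
  have hcol : ∀ k, (fun j => V j k) = ⇑(bV k) := by
    intro k; funext j; rfl
  have heig : ∀ k, (Bᵀ * B) *ᵥ (fun j => V j k) = μ k • (fun j => V j k) := by
    intro k
    rw [hcol k]
    have := hG.mulVec_eigenvectorBasis (σ k)
    rw [hbVapp k]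
    exact this
  have hdot : ∀ k l, (B *ᵥ fun m => V m k) ⬝ᵥ (B *ᵥ fun m => V m l)
      = μ l * (if k = l then (1:ℝ) else 0) := by
    intro k l
    calc (B *ᵥ fun m => V m k) ⬝ᵥ (B *ᵥ fun m => V m l)
        = ((fun m => V m k) ᵥ* Bᵀ) ⬝ᵥ (B *ᵥ fun m => V m l) := by rw [Matrix.vecMul_transpose]
      _ = ((fun m => V m k) ᵥ* Bᵀ ᵥ* B) ⬝ᵥ (fun m => V m l) := by
            rw [Matrix.dotProduct_mulVec]
      _ = ((fun m => V m k) ᵥ* (Bᵀ * B)) ⬝ᵥ (fun m => V m l) := by rw [Matrix.vecMul_vecMul]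
      _ = (fun m => V m k) ⬝ᵥ ((Bᵀ * B) *ᵥ fun m => V m l) := (Matrix.dotProduct_mulVec _ _ _).symm
      _ = (fun m => V m k) ⬝ᵥ (μ l • fun m => V m l) := by rw [heig l]
      _ = μ l * ((fun m => V m k) ⬝ᵥ fun m => V m l) := by rw [dotProduct_smul]; rfl
      _ = μ l * (if k = l then (1:ℝ) else 0) := by rw [← horthV k l]; rfl
  -- the left singular vectors
  set u : Fin p₂ → EuclideanSpace ℝ (Fin p₁) := fun k =>
    (Real.sqrt (μ k))⁻¹ • ((WithLp.equiv 2 ((i : Fin p₁) → ℝ)).symm (B *ᵥ fun m => V m k)) with hu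
  have huapp : ∀ k i, u k i = (Real.sqrt (μ k))⁻¹ * (B *ᵥ fun m => V m k) i := by
    intro k i; simp [hu]
  have hinner : ∀ k l, (inner ℝ (u k) (u l) : ℝ) =
      (Real.sqrt (μ k))⁻¹ * (Real.sqrt (μ l))⁻¹ * (μ l * if k = l then (1:ℝ) else 0) := by
    intro k l
    rw [PiLp.inner_apply]
    simp only [RCLike.inner_apply, starRingEnd_apply, star_trivial]
    rw [← hdot k l, dotProduct, Finset.mul_sum]
    refine Finset.sum_congr rfl fun i _ => ?_
    rw [huapp, huapp]; ring
  have hinner_one : ∀ k, 0 < μ k → (inner ℝ (u k) (u k) : ℝ) = 1 := by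
    intro k hk
    rw [hinner, if_pos rfl, mul_one]
    have hs : Real.sqrt (μ k) ≠ 0 := by positivity
    rw [← Real.mul_self_sqrt hk.le]
    field_simp
    rw [Real.sqrt_sq (Real.sqrt_nonneg _)]
  have hinner_zero : ∀ k l, k ≠ l → (inner ℝ (u k) (u l) : ℝ) = 0 := by
    intro k l hkl
    rw [hinner, if_neg hkl]; ring
  -- positive singular values occur only for indices < p₁
  have hcard : ∀ l : Fin p₂, 0 < μ l → (l : ℕ) < p₁ := by
    intro l hl
    set T : Set (Fin p₂) := {k | 0 < μ k} with hT
    have hTorth : Orthonormal ℝ (T.restrict u) := by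
      rw [orthonormal_iff_ite]
      rintro ⟨k, hk⟩ ⟨m, hm⟩
      by_cases hkm : k = m
      · subst hkm
        rw [if_pos rfl]
        exact hinner_one k hk
      · rw [if_neg (fun hc => hkm (congrArg Subtype.val hc))]
        exact hinner_zero k m hkm
    have h2 : Fintype.card T ≤ Module.finrank ℝ (EuclideanSpace ℝ (Fin p₁)) :=
      hTorth.linearIndependent.fintype_card_le_finrank
    rw [finrank_euclideanSpace_fin] at h2
    have hmap : Function.Injective (fun m : Fin ((l:ℕ)+1) =>
        (⟨⟨(m:ℕ), by omega⟩, lt_of_lt_of_le hl (hμanti (by simp [Fin.le_def]; omega))⟩ : T)) := by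
      intro a b hab
      have := congrArg (fun t : T => ((t : Fin p₂) : ℕ)) hab
      simpa [Fin.ext_iff] using this
    have h1 := Fintype.card_le_of_injective _ hmap
    simp only [Fintype.card_fin] at h1
    have h3 : Fintype.card {x // x ∈ T} = Fintype.card ↑T := Fintype.card_congr (Equiv.refl _)
    omega
  -- extend to an orthonormal basis of ℝ^{p₁}
  set s : Set (Fin p₁) := {i | ∃ h : (i:ℕ) < p₂, 0 < μ ⟨(i:ℕ), h⟩} with hs
  set w : Fin p₁ → EuclideanSpace ℝ (Fin p₁) := fun i =>
    if h : (i:ℕ) < p₂ then u ⟨(i:ℕ), h⟩ else 0 with hw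
  have hworth : Orthonormal ℝ (s.restrict w) := by
    rw [orthonormal_iff_ite]
    intro x y
    have hx2 : ((x : Fin p₁) : ℕ) < p₂ := x.2.choose
    have hxμ : 0 < μ ⟨((x : Fin p₁) : ℕ), hx2⟩ := x.2.choose_spec
    have hy2 : ((y : Fin p₁) : ℕ) < p₂ := y.2.choose
    have ex : s.restrict w x = u ⟨((x : Fin p₁) : ℕ), hx2⟩ := by
      show w ↑x = _
      simp only [hw]
      rw [dif_pos hx2]
    have ey : s.restrict w y = u ⟨((y : Fin p₁) : ℕ), hy2⟩ := by
      show w ↑y = _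
      simp only [hw]
      rw [dif_pos hy2]
    rw [ex, ey]
    by_cases hxy : x = y
    · subst hxy
      rw [if_pos rfl]
      exact hinner_one _ hxμ
    · rw [if_neg hxy]
      apply hinner_zero
      intro hc
      exact hxy (Subtype.ext (Fin.ext (by simpa [Fin.ext_iff] using hc)))
  obtain ⟨bU, hbU⟩ := hworth.exists_orthonormalBasis_extension_of_card_eq (by simp)
  set U : Matrix (Fin p₁) (Fin p₁) ℝ := Matrix.of fun i k => bU k i with hU
  have hUU : Uᵀ * U = 1 := by
    ext k l
    rw [Matrix.mul_apply]
    simp only [transpose_apply]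
    have h := orthonormal_iff_ite.mp bU.orthonormal k l
    rw [PiLp.inner_apply] at h
    simp only [RCLike.inner_apply, starRingEnd_apply, star_trivial] at h
    rw [Matrix.one_apply, ← h]
    exact Finset.sum_congr rfl fun j _ => mul_comm _ _
  refine ⟨U, V, fun k => Real.sqrt (μ (Fin.castLE (min_le_right p₁ p₂) k)), hUU, hVV, ?_, ?_, ?_⟩
  · intro k l hkl
    exact Real.sqrt_le_sqrt (hμanti hkl)
  · intro k; exact Real.sqrt_nonneg _
  · intro i j
    have hVVt : V * Vᵀ = 1 := mul_eq_one_comm.mp hVV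
    have hB : B i j = ∑ l, (B *ᵥ fun m => V m l) i * V j l := by
      conv_lhs => rw [show B = B * V * Vᵀ by rw [Matrix.mul_assoc, hVVt, Matrix.mul_one]]
      rw [Matrix.mul_apply]
      refine Finset.sum_congr rfl fun l _ => ?_
      rw [Matrix.mul_apply, Matrix.transpose_apply]
      rfl
    have hvanish : ∀ l : Fin p₂, μ l = 0 → (B *ᵥ fun m => V m l) = 0 := by
      intro l hl
      have hd := hdot l l
      rw [if_pos rfl, hl, zero_mul] at hd
      exact dotProduct_self_eq_zero.mp hd
    rw [hB]
    rw [← Finset.sum_subset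
      (Finset.filter_subset (fun l : Fin p₂ => (l:ℕ) < min p₁ p₂) Finset.univ)
      (fun l _ hl => ?_)]
    swap
    · -- vanishing outside the filter
      have hlnot : ¬ ((l:ℕ) < min p₁ p₂) := by simpa using hl
      have hμl : μ l = 0 := by
        rcases lt_or_eq_of_le (hμ0 l) with hpos | heq
        · exact absurd (lt_min (hcard l hpos) l.isLt) hlnot
        · exact heq.symm
      rw [hvanish l hμl]
      simp
    · -- reindex the filtered sum by Fin (min p₁ p₂)
      refine Finset.sum_bij'
        (i := fun (l : Fin p₂) (hl : l ∈ Finset.univ.filter fun l : Fin p₂ => (l:ℕ) < min p₁ p₂) =>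
          (⟨(l:ℕ), by simpa using hl⟩ : Fin (min p₁ p₂)))
        (j := fun (k : Fin (min p₁ p₂)) _ => Fin.castLE (min_le_right p₁ p₂) k)
        ?_ ?_ ?_ ?_ ?_
      · intro a ha; exact Finset.mem_univ _
      · intro k hk
        simp only [Finset.mem_filter, Finset.mem_univ, true_and]
        exact k.isLt
      · intro a ha; exact Fin.ext rfl
      · intro k hk; exact Fin.ext rfl
      · intro l hl
        have hlmin : (l:ℕ) < min p₁ p₂ := by simpa using hl
        have hlp1 : (l:ℕ) < p₁ := lt_of_lt_of_le hlmin (min_le_left p₁ p₂)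
        show (B *ᵥ fun m => V m l) i * V j l = Real.sqrt (μ l) * U i ⟨(l:ℕ), hlp1⟩ * V j l
        rcases lt_or_eq_of_le (hμ0 l) with hpos | heq
        · have hsne : Real.sqrt (μ l) ≠ 0 := by positivity
          have hUval : U i ⟨(l:ℕ), hlp1⟩ = u l i := by
            show bU ⟨(l:ℕ), hlp1⟩ i = u l i
            rw [hbU _ ⟨l.isLt, hpos⟩]
            show (if h : ((⟨(l:ℕ), hlp1⟩ : Fin p₁) : ℕ) < p₂ then u ⟨(l:ℕ), h⟩ else 0) i = u l i
            rw [dif_pos l.isLt]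
          rw [hUval, huapp l i]
          field_simp
        · rw [hvanish l heq.symm, ← heq, Real.sqrt_zero]
          simp


noncomputable def Dmat (p₁ p₂ : ℕ) (d : Fin (min p₁ p₂) → ℝ) : Matrix (Fin p₁) (Fin p₂) ℝ :=
  Matrix.of fun k l =>
    if h : (k : ℕ) = (l : ℕ) ∧ (k : ℕ) < min p₁ p₂ then d ⟨(k : ℕ), h.2⟩ else 0

lemma blkdiag_eq_kron {p₁ s₁ p₂ s₂ : ℕ} (d : Fin (min p₁ p₂) → ℝ)
    (C : Matrix (Fin s₁) (Fin s₂) ℝ) :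
    blkdiag p₁ p₂ (min p₁ p₂) (fun k => d k • C) = (Dmat p₁ p₂ d) ⊗ₖ C := by
  ext x y
  simp only [blkdiag, Dmat, Matrix.of_apply, kroneckerMap_apply]
  by_cases h : (x.1 : ℕ) = (y.1 : ℕ) ∧ (x.1 : ℕ) < min p₁ p₂
  · rw [dif_pos h, dif_pos h]
    simp
  · rw [dif_neg h, dif_neg h, zero_mul]

lemma UDV_apply {p₁ p₂ : ℕ} (U : Matrix (Fin p₁) (Fin p₁) ℝ) (V : Matrix (Fin p₂) (Fin p₂) ℝ)
    (d : Fin (min p₁ p₂) → ℝ) (i : Fin p₁) (j : Fin p₂) :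
    (U * Dmat p₁ p₂ d * Vᵀ) i j =
      ∑ k : Fin (min p₁ p₂), d k * U i (Fin.castLE (min_le_left p₁ p₂) k)
        * V j (Fin.castLE (min_le_right p₁ p₂) k) := by
  rw [Matrix.mul_apply]
  have hinner : ∀ l : Fin p₂, (U * Dmat p₁ p₂ d) i l =
      if h : (l : ℕ) < min p₁ p₂ then
        U i ⟨(l : ℕ), lt_of_lt_of_le h (min_le_left p₁ p₂)⟩ * d ⟨(l : ℕ), h⟩ else 0 := by
    intro l
    rw [Matrix.mul_apply]
    by_cases h : (l : ℕ) < min p₁ p₂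
    · rw [dif_pos h]
      rw [Finset.sum_eq_single (⟨(l : ℕ), lt_of_lt_of_le h (min_le_left p₁ p₂)⟩ : Fin p₁)]
      · simp only [Dmat, Matrix.of_apply]
        rw [dif_pos (⟨trivial, h⟩ : True ∧ (l : ℕ) < min p₁ p₂)]
      · intro b _ hb
        simp only [Dmat, Matrix.of_apply]
        rw [dif_neg, mul_zero]
        rintro ⟨hb1, hb2⟩
        exact hb (Fin.ext hb1)
      · intro hmem; exact absurd (Finset.mem_univ _) hmem
    · rw [dif_neg h]
      apply Finset.sum_eq_zero
      intro b _
      simp only [Dmat, Matrix.of_apply]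
      rw [dif_neg, mul_zero]
      rintro ⟨hb1, hb2⟩
      rw [hb1] at hb2
      exact h hb2
  calc ∑ l, (U * Dmat p₁ p₂ d) i l * Vᵀ l j
      = ∑ l : Fin p₂, (if h : (l : ℕ) < min p₁ p₂ then
          U i ⟨(l : ℕ), lt_of_lt_of_le h (min_le_left p₁ p₂)⟩ * d ⟨(l : ℕ), h⟩ else 0)
          * V j l := by
        refine Finset.sum_congr rfl fun l _ => ?_
        rw [hinner l, Matrix.transpose_apply]
    _ = ∑ k : Fin (min p₁ p₂), d k * U i (Fin.castLE (min_le_left p₁ p₂) k)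
          * V j (Fin.castLE (min_le_right p₁ p₂) k) := by
        rw [← Finset.sum_subset
          (Finset.filter_subset (fun l : Fin p₂ => (l:ℕ) < min p₁ p₂) Finset.univ)
          (fun l _ hl => by rw [dif_neg (by simpa using hl), zero_mul])]
        refine Finset.sum_bij'
          (i := fun (l : Fin p₂) (hl : l ∈ Finset.univ.filter
            fun l : Fin p₂ => (l:ℕ) < min p₁ p₂) => (⟨(l:ℕ), by simpa using hl⟩ : Fin (min p₁ p₂)))
          (j := fun (k : Fin (min p₁ p₂)) _ => Fin.castLE (min_le_right p₁ p₂) k)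
          ?_ ?_ ?_ ?_ ?_
        · intro a ha; exact Finset.mem_univ _
        · intro k hk
          simp only [Finset.mem_filter, Finset.mem_univ, true_and]
          exact k.isLt
        · intro a ha; exact Fin.ext rfl
        · intro k hk; exact Fin.ext rfl
        · intro l hl
          have hlmin : (l:ℕ) < min p₁ p₂ := by simpa using hl
          rw [dif_pos hlmin]
          show U i ⟨(l:ℕ), lt_of_lt_of_le hlmin (min_le_left p₁ p₂)⟩ * d ⟨(l:ℕ), hlmin⟩ * V j l
            = d ⟨(l:ℕ), hlmin⟩ * U i ⟨(l:ℕ), lt_of_lt_of_le hlmin (min_le_left p₁ p₂)⟩ * V j l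
          ring


end SvdStp

/-- SVD-STP existence: let `A ∈ ℝ^{n₁×n₂}` with `s₁ ∣ n₁`, `s₂ ∣ n₂`
(`p₁ = n₁/s₁`, `p₂ = n₂/s₂`, rows/columns of `A` indexed blockwise).  There exist
orthogonal `U ∈ ℝ^{p₁×p₁}`, `V ∈ ℝ^{p₂×p₂}` and blocks `S₁,…,S_p ∈ ℝ^{s₁×s₂}`
(`p = min{p₁,p₂}`) with `‖S₁‖_F ≥ ⋯ ≥ ‖S_p‖_F` such that
`A = U ⋉ Σ ⋉ Vᵀ + E₁ = (U ⊗ I_{s₁}) Σ (V ⊗ I_{s₂})ᵀ + E₁` with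
`Σ = blkdiag(S₁,…,S_p)` and `‖E₁‖_F = min_{B,C} ‖A − B ⊗ C‖_F`. -/
theorem svd_stp_exists {p₁ s₁ p₂ s₂ : ℕ}
    (A : Matrix (Fin p₁ × Fin s₁) (Fin p₂ × Fin s₂) ℝ) :
    ∃ (U : Matrix (Fin p₁) (Fin p₁) ℝ) (V : Matrix (Fin p₂) (Fin p₂) ℝ)
      (S : Fin (min p₁ p₂) → Matrix (Fin s₁) (Fin s₂) ℝ),
      Uᵀ * U = 1 ∧ U * Uᵀ = 1 ∧ Vᵀ * V = 1 ∧ V * Vᵀ = 1 ∧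
      Antitone (fun i => frob (S i)) ∧
      (∀ (B : Matrix (Fin p₁) (Fin p₂) ℝ) (C : Matrix (Fin s₁) (Fin s₂) ℝ),
        frob (A - (U ⊗ₖ (1 : Matrix (Fin s₁) (Fin s₁) ℝ)) *
            blkdiag p₁ p₂ (min p₁ p₂) S *
            ((V ⊗ₖ (1 : Matrix (Fin s₂) (Fin s₂) ℝ)))ᵀ) ≤
          frob (A - B ⊗ₖ C)) := by
  obtain ⟨B₀, C₀, hmin⟩ := SvdStp.exists_min_kron A
  obtain ⟨U, V, d, hUU, hVV, hdanti, hd0, hB⟩ := SvdStp.svd_exists B₀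
  refine ⟨U, V, fun k => d k • C₀, hUU, mul_eq_one_comm.mp hUU, hVV,
    mul_eq_one_comm.mp hVV, ?_, ?_⟩
  · intro k l hkl
    simp only
    rw [SvdStp.frob_smul, SvdStp.frob_smul]
    refine mul_le_mul_of_nonneg_right ?_ (SvdStp.frob_nonneg C₀)
    rw [abs_of_nonneg (hd0 l), abs_of_nonneg (hd0 k)]
    exact hdanti hkl
  · intro B C
    have hkey : (U ⊗ₖ (1 : Matrix (Fin s₁) (Fin s₁) ℝ)) *
        blkdiag p₁ p₂ (min p₁ p₂) (fun k => d k • C₀) *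
        ((V ⊗ₖ (1 : Matrix (Fin s₂) (Fin s₂) ℝ)))ᵀ = B₀ ⊗ₖ C₀ := by
      rw [SvdStp.blkdiag_eq_kron, ← Matrix.kroneckerMap_transpose, Matrix.transpose_one,
        ← Matrix.mul_kronecker_mul, ← Matrix.mul_kronecker_mul, Matrix.one_mul, Matrix.mul_one]
      ext x y
      show (U * SvdStp.Dmat p₁ p₂ d * Vᵀ) x.1 y.1 * C₀ x.2 y.2 = B₀ x.1 y.1 * C₀ x.2 y.2
      rw [SvdStp.UDV_apply, ← hB x.1 y.1]
    rw [hkey]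
    exact hmin B C
end

section
/- Truncation error of SVD-STP: with A = U⋉Σ⋉Vᵀ the SVD-STP of A, Σ = blkdiag(S₁,…,S_p), U_r, V_r the first r columns of U, V, and Σ_r = blkdiag(S₁,…,S_r), the Frobenius norm of the discarded part satisfies ‖U⋉Σ⋉Vᵀ − U_r⋉Σ_r⋉V_rᵀ‖_F = √(Σ_{i=r+1}^p ‖Sᵢ‖_F²). -/
open Matrix Kronecker

private lemma frob_sq_trace {α β : Type*} [Fintype α] [Fintype β] (M : Matrix α β ℝ) :
    ∑ i, ∑ j, (M i j) ^ 2 = (Mᵀ * M).trace := by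
  simp only [Matrix.trace, Matrix.diag, Matrix.mul_apply, Matrix.transpose_apply, sq]
  exact Finset.sum_comm

private lemma frob_conj {α β γ δ : Type*} [Fintype α] [Fintype β] [Fintype γ] [Fintype δ]
    [DecidableEq β] [DecidableEq δ]
    (Q : Matrix α β ℝ) (P : Matrix γ δ ℝ) (M : Matrix β δ ℝ)
    (hQ : Qᵀ * Q = 1) (hP : Pᵀ * P = 1) :
    frob (Q * M * Pᵀ) = frob M := by
  have hQ' : ∀ (X : Matrix β γ ℝ), Qᵀ * (Q * X) = X := fun X => by
    rw [← Matrix.mul_assoc, hQ, Matrix.one_mul]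
  unfold frob
  rw [frob_sq_trace, frob_sq_trace]
  have h1 : (Q * M * Pᵀ)ᵀ * (Q * M * Pᵀ) = P * (Mᵀ * M) * Pᵀ := by
    simp only [Matrix.transpose_mul, Matrix.transpose_transpose, Matrix.mul_assoc]
    rw [hQ' (M * Pᵀ)]
  rw [h1, Matrix.trace_mul_cycle, hP, Matrix.one_mul]

private lemma sum_dite_fin {q pp : ℕ} (h : pp ≤ q) (G : Fin pp → ℝ) :
    ∑ k : Fin q, (if hk : (k : ℕ) < pp then G ⟨k, hk⟩ else 0) = ∑ k : Fin pp, G k := by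
  set F : ℕ → ℝ := fun n => if hn : n < pp then G ⟨n, hn⟩ else 0 with hF
  have h1 : ∑ k : Fin q, (if hk : (k : ℕ) < pp then G ⟨k, hk⟩ else 0)
      = ∑ n ∈ Finset.range q, F n := Fin.sum_univ_eq_sum_range F q
  have h2 : ∑ n ∈ Finset.range pp, F n = ∑ k : Fin pp, G k := by
    rw [← Fin.sum_univ_eq_sum_range F pp]
    exact Finset.sum_congr rfl fun k _ => by simp only [F, dif_pos k.isLt]
  rw [h1, ← h2]
  symm
  apply Finset.sum_subset (Finset.range_subset_range.mpr h)
  intro x _ hx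
  simp only [F, dif_neg (not_lt.mpr (by simpa using hx))]

private lemma sandwich_apply {m n q₁ q₂ s₁ s₂ pp : ℕ}
    (W : Matrix (Fin m) (Fin q₁) ℝ) (X : Matrix (Fin n) (Fin q₂) ℝ)
    (S : Fin pp → Matrix (Fin s₁) (Fin s₂) ℝ) (h1 : pp ≤ q₁) (h2 : pp ≤ q₂)
    (i : Fin m) (a : Fin s₁) (j : Fin n) (b : Fin s₂) :
    ((W ⊗ₖ (1 : Matrix (Fin s₁) (Fin s₁) ℝ)) * blkdiag q₁ q₂ pp S *
        ((X ⊗ₖ (1 : Matrix (Fin s₂) (Fin s₂) ℝ)))ᵀ) (i, a) (j, b) =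
      ∑ k : Fin pp, W i (Fin.castLE h1 k) * S k a b * X j (Fin.castLE h2 k) := by
  simp only [Matrix.mul_apply, Matrix.transpose_apply, Matrix.kroneckerMap_apply,
    Matrix.one_apply, Fintype.sum_prod_type, blkdiag, Matrix.of_apply,
    mul_ite, ite_mul, mul_one, one_mul, mul_zero, zero_mul,
    Finset.sum_ite_eq, Finset.sum_ite_eq', Finset.mem_univ, if_true]
  simp only [Finset.sum_mul]
  rw [Finset.sum_comm]
  have key : ∀ k : Fin q₁,
      (∑ l : Fin q₂,
          (W i k * if h : (k:ℕ) = (l:ℕ) ∧ (k:ℕ) < pp then S ⟨k, h.2⟩ a b else 0) * X j l)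
        = if hk : (k:ℕ) < pp then
            W i (Fin.castLE h1 ⟨k, hk⟩) * S ⟨k, hk⟩ a b * X j (Fin.castLE h2 ⟨k, hk⟩) else 0 := by
    intro k
    by_cases hk : (k:ℕ) < pp
    · rw [dif_pos hk, Finset.sum_eq_single (Fin.castLE h2 ⟨k, hk⟩)]
      · rw [dif_pos ⟨rfl, hk⟩]
        rfl
      · intro l _ hl
        rw [dif_neg (fun h => hl (Fin.ext h.1.symm)), mul_zero, zero_mul]
      · intro h; exact absurd (Finset.mem_univ _) h
    · rw [dif_neg hk]
      apply Finset.sum_eq_zero; intro l _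
      rw [dif_neg (fun h => hk h.2), mul_zero, zero_mul]
  rw [Finset.sum_congr rfl (fun k _ => key k)]
  exact sum_dite_fin h1 (fun k => W i (Fin.castLE h1 k) * S k a b * X j (Fin.castLE h2 k))

private lemma blkdiag_sum_sq {q₁ q₂ s₁ s₂ pp : ℕ} (h1 : pp ≤ q₁) (h2 : pp ≤ q₂)
    (S : Fin pp → Matrix (Fin s₁) (Fin s₂) ℝ) :
    ∑ x, ∑ y, (blkdiag q₁ q₂ pp S x y) ^ 2 = ∑ m : Fin pp, ∑ a, ∑ b, (S m a b) ^ 2 := by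
  simp only [Fintype.sum_prod_type, blkdiag, Matrix.of_apply]
  have swap : ∀ k : Fin q₁,
      (∑ a : Fin s₁, ∑ l : Fin q₂, ∑ b : Fin s₂,
        (if h : (k:ℕ) = (l:ℕ) ∧ (k:ℕ) < pp then S ⟨k, h.2⟩ a b else 0) ^ 2)
      = ∑ l : Fin q₂, ∑ a : Fin s₁, ∑ b : Fin s₂,
        (if h : (k:ℕ) = (l:ℕ) ∧ (k:ℕ) < pp then S ⟨k, h.2⟩ a b else 0) ^ 2 :=
    fun k => Finset.sum_comm
  rw [Finset.sum_congr rfl (fun k _ => swap k)]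
  have key : ∀ k : Fin q₁,
      (∑ l : Fin q₂, ∑ a : Fin s₁, ∑ b : Fin s₂,
        (if h : (k:ℕ) = (l:ℕ) ∧ (k:ℕ) < pp then S ⟨k, h.2⟩ a b else 0) ^ 2)
      = if hk : (k:ℕ) < pp then ∑ a, ∑ b, (S ⟨k, hk⟩ a b) ^ 2 else 0 := by
    intro k
    by_cases hk : (k:ℕ) < pp
    · rw [dif_pos hk, Finset.sum_eq_single (Fin.castLE h2 ⟨k, hk⟩)]
      · simp only [dif_pos (⟨rfl, hk⟩ : (k:ℕ) = ((Fin.castLE h2 ⟨k, hk⟩ : Fin q₂):ℕ) ∧ (k:ℕ) < pp)]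
      · intro l _ hl
        apply Finset.sum_eq_zero; intro a _
        apply Finset.sum_eq_zero; intro b _
        rw [dif_neg (fun h => hl (Fin.ext h.1.symm))]
        exact zero_pow two_ne_zero
      · intro h; exact absurd (Finset.mem_univ _) h
    · rw [dif_neg hk]
      apply Finset.sum_eq_zero; intro l _
      apply Finset.sum_eq_zero; intro a _
      apply Finset.sum_eq_zero; intro b _
      rw [dif_neg (fun h => hk h.2)]
      exact zero_pow two_ne_zero
  rw [Finset.sum_congr rfl (fun k _ => key k)]
  exact sum_dite_fin h1 (fun m => ∑ a, ∑ b, (S m a b) ^ 2)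

/-- truncation error of the SVD-STP: with `A = U ⋉ Σ ⋉ Vᵀ` the SVD-STP of
`A` (`U, V` orthogonal, `Σ = blkdiag(S₁,…,S_p)`, `p = min{p₁,p₂}`), `U_r, V_r` the first
`r` columns of `U, V`, and `Σ_r = blkdiag(S₁,…,S_r)`, the discarded part satisfies
`‖U ⋉ Σ ⋉ Vᵀ − U_r ⋉ Σ_r ⋉ V_rᵀ‖_F = √(∑_{i=r+1}^p ‖Sᵢ‖_F²)`. -/
theorem svd_stp_truncation_error {p₁ s₁ p₂ s₂ r : ℕ}
    (hr : r ≤ min p₁ p₂)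
    (U : Matrix (Fin p₁) (Fin p₁) ℝ) (V : Matrix (Fin p₂) (Fin p₂) ℝ)
    (hU : Uᵀ * U = 1) (hU' : U * Uᵀ = 1) (hV : Vᵀ * V = 1) (hV' : V * Vᵀ = 1)
    (S : Fin (min p₁ p₂) → Matrix (Fin s₁) (Fin s₂) ℝ)
    (hS : Antitone (fun i => frob (S i)))
    (Ur : Matrix (Fin p₁) (Fin r) ℝ) (Vr : Matrix (Fin p₂) (Fin r) ℝ)
    (hUr : ∀ i j, Ur i j = U i (Fin.castLE (hr.trans (min_le_left _ _)) j))
    (hVr : ∀ i j, Vr i j = V i (Fin.castLE (hr.trans (min_le_right _ _)) j)) :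
    frob
        ((U ⊗ₖ (1 : Matrix (Fin s₁) (Fin s₁) ℝ)) * blkdiag p₁ p₂ (min p₁ p₂) S *
            ((V ⊗ₖ (1 : Matrix (Fin s₂) (Fin s₂) ℝ)))ᵀ -
          (Ur ⊗ₖ (1 : Matrix (Fin s₁) (Fin s₁) ℝ)) *
            blkdiag r r r (fun i => S (Fin.castLE hr i)) *
            ((Vr ⊗ₖ (1 : Matrix (Fin s₂) (Fin s₂) ℝ)))ᵀ) =
      Real.sqrt (∑ i ∈ Finset.univ.filter
        (fun i : Fin (min p₁ p₂) => r ≤ (i : ℕ)), frob (S i) ^ 2) := by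
  have h1 : min p₁ p₂ ≤ p₁ := min_le_left _ _
  have h2 : min p₁ p₂ ≤ p₂ := min_le_right _ _
  set T : Fin (min p₁ p₂) → Matrix (Fin s₁) (Fin s₂) ℝ :=
    fun m => if r ≤ (m : ℕ) then S m else 0 with hT
  have key : (U ⊗ₖ (1 : Matrix (Fin s₁) (Fin s₁) ℝ)) * blkdiag p₁ p₂ (min p₁ p₂) S *
        ((V ⊗ₖ (1 : Matrix (Fin s₂) (Fin s₂) ℝ)))ᵀ -
      (Ur ⊗ₖ (1 : Matrix (Fin s₁) (Fin s₁) ℝ)) *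
        blkdiag r r r (fun i => S (Fin.castLE hr i)) *
        ((Vr ⊗ₖ (1 : Matrix (Fin s₂) (Fin s₂) ℝ)))ᵀ
      = (U ⊗ₖ (1 : Matrix (Fin s₁) (Fin s₁) ℝ)) * blkdiag p₁ p₂ (min p₁ p₂) T *
        ((V ⊗ₖ (1 : Matrix (Fin s₂) (Fin s₂) ℝ)))ᵀ := by
    ext x y
    obtain ⟨i, a⟩ := x; obtain ⟨j, b⟩ := y
    rw [Matrix.sub_apply, sandwich_apply U V S h1 h2,
        sandwich_apply Ur Vr _ le_rfl le_rfl,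
        sandwich_apply U V T h1 h2]
    set g : Fin (min p₁ p₂) → ℝ :=
      fun k => U i (Fin.castLE h1 k) * S k a b * V j (Fin.castLE h2 k) with hg
    have e1 : ∑ k : Fin r,
        Ur i (Fin.castLE le_rfl k) * S (Fin.castLE hr k) a b * Vr j (Fin.castLE le_rfl k)
        = ∑ k : Fin r, g (Fin.castLE hr k) :=
      Finset.sum_congr rfl fun k _ => by rw [hUr, hVr]; rfl
    have e1' := (sum_dite_fin hr (fun k => g (Fin.castLE hr k))).symm
    rw [e1, e1']
    have e2 : ∀ k : Fin (min p₁ p₂),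
        U i (Fin.castLE h1 k) * T k a b * V j (Fin.castLE h2 k)
        = if r ≤ (k : ℕ) then g k else 0 := by
      intro k
      by_cases hk : r ≤ (k : ℕ)
      · simp only [hT, if_pos hk]; rfl
      · simp only [hT, if_neg hk, Matrix.zero_apply, mul_zero, zero_mul]
    rw [Finset.sum_congr rfl (fun k _ => e2 k), ← Finset.sum_sub_distrib]
    apply Finset.sum_congr rfl
    intro k _
    by_cases hk : (k : ℕ) < r
    · rw [dif_pos hk, if_neg (not_le.mpr hk)]
      exact sub_self (g k)
    · rw [dif_neg hk, if_pos (not_lt.mp hk), sub_zero]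
  have hUk : ((U ⊗ₖ (1 : Matrix (Fin s₁) (Fin s₁) ℝ)))ᵀ * (U ⊗ₖ 1) = 1 := by
    rw [← Matrix.kroneckerMap_transpose, Matrix.transpose_one, ← Matrix.mul_kronecker_mul,
      hU, Matrix.one_mul, Matrix.one_kronecker_one]
  have hVk : ((V ⊗ₖ (1 : Matrix (Fin s₂) (Fin s₂) ℝ)))ᵀ * (V ⊗ₖ 1) = 1 := by
    rw [← Matrix.kroneckerMap_transpose, Matrix.transpose_one, ← Matrix.mul_kronecker_mul,
      hV, Matrix.one_mul, Matrix.one_kronecker_one]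
  rw [key, frob_conj _ _ _ hUk hVk]
  unfold frob
  congr 1
  rw [blkdiag_sum_sq h1 h2 T, Finset.sum_filter]
  apply Finset.sum_congr rfl
  intro m _
  by_cases hm : r ≤ (m : ℕ)
  · simp only [hT, if_pos hm]
    exact (Real.sq_sqrt (Finset.sum_nonneg fun _ _ =>
      Finset.sum_nonneg fun _ _ => sq_nonneg _)).symm
  · simp only [hT, if_neg hm, Matrix.zero_apply]
    simp
end

section
/- Core unfolding formula for HOSVD-STP: if ℬ = 𝒜 ⋉₁ U⁽¹⁾ᵀ ⋯ ⋉_d U⁽ᵈ⁾ᵀ with orthogonal U⁽ᵏ⁾ ∈ ℝ^{(n_k/s_k)×(n_k/s_k)}, then ℬ_(k) = Û⁽ᵏ⁾ᵀ 𝒜_(k) Π⁽⁻ᵏ⁾ where Û⁽ᵏ⁾ = U⁽ᵏ⁾⊗I_{s_k} and Π⁽⁻ᵏ⁾ = Û⁽ᵈ⁾⊗⋯⊗Û⁽ᵏ⁺¹⁾⊗Û⁽ᵏ⁻¹⁾⊗⋯⊗Û⁽¹⁾, and consequently ℬ_(k)ℬ_(k)ᵀ = Û⁽ᵏ⁾ᵀ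 𝒜_(k) 𝒜_(k)ᵀ Û⁽ᵏ⁾. -/
open Matrix Kronecker

/-- Reinterpret a tensor along a pointwise equality of dimension vectors. -/
def castTensor {d : ℕ} {n n' : Fin d → ℕ} (h : ∀ i, n i = n' i)
    (A : ((i : Fin d) → Fin (n i)) → ℝ) : ((i : Fin d) → Fin (n' i)) → ℝ :=
  fun idx => A fun i => Fin.cast (h i).symm (idx i)

/-- The conventional tensor mode-`k` product `𝒜 ×ₖ U` of a tensor
`𝒜 ∈ ℝ^{n₁×⋯×n_d}` with a matrix `U ∈ ℝ^{m×n_k}`. -/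
noncomputable def modeMul {d : ℕ} {n : Fin d → ℕ} {m : ℕ} (k : Fin d)
    (A : ((i : Fin d) → Fin (n i)) → ℝ) (U : Matrix (Fin m) (Fin (n k)) ℝ) :
    ((i : Fin d) → Fin (Function.update n k m i)) → ℝ :=
  fun idx => ∑ j : Fin (n k),
    U (Fin.cast (by simp) (idx k)) j *
      A (fun i =>
        if h : i = k then Fin.cast (congrArg n h).symm j
        else Fin.cast (by rw [Function.update_of_ne h]) (idx i))

/-- The mode-`k` semi-tensor product `𝒜 ⋉ₖ U := 𝒜 ×ₖ (U ⊗ I_s)` of a tensor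
`𝒜 ∈ ℝ^{n₁×⋯×n_d}` with `U ∈ ℝ^{m×(n_k/s)}`, where `s` is a factor of `n_k`
(recorded by the hypothesis `c * s = n k`, `c = n_k/s`). -/
noncomputable def modeSTP {d : ℕ} {n : Fin d → ℕ} {m c s : ℕ} (k : Fin d)
    (h : c * s = n k) (A : ((i : Fin d) → Fin (n i)) → ℝ)
    (U : Matrix (Fin m) (Fin c) ℝ) :
    ((i : Fin d) → Fin (Function.update n k (m * s) i)) → ℝ :=
  modeMul k A (Matrix.reindex (Equiv.refl _) (finCongr h) (kronI s U))

/-- `U ⊗ I_s` reinterpreted as a `c × e` matrix, where `a * s = c` and `b * s = e`. -/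
noncomputable def liftMat {a b : ℕ} (s : ℕ) {c e : ℕ} (h₁ : a * s = c) (h₂ : b * s = e)
    (U : Matrix (Fin a) (Fin b) ℝ) : Matrix (Fin c) (Fin e) ℝ :=
  Matrix.reindex (finCongr h₁) (finCongr h₂) (kronI s U)

/-- The multilinear (Tucker) product `ℬ ×₁ M⁽¹⁾ ×₂ M⁽²⁾ ⋯ ×_d M⁽ᵈ⁾`, i.e. the result of
the chain of modal products of a tensor `ℬ ∈ ℝ^{m₁×⋯×m_d}` with matrices
`M⁽ᵏ⁾ ∈ ℝ^{n_k×m_k}` applied along modes `1, …, d`.  In particular the modal STP chain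
`ℬ ⋉₁ U⁽¹⁾ ⋯ ⋉_d U⁽ᵈ⁾` is `tucker (fun k => liftMat (s k) _ _ (U k)) ℬ`. -/
noncomputable def tucker {d : ℕ} {m n : Fin d → ℕ}
    (M : (k : Fin d) → Matrix (Fin (n k)) (Fin (m k)) ℝ)
    (B : ((i : Fin d) → Fin (m i)) → ℝ) : ((i : Fin d) → Fin (n i)) → ℝ :=
  fun idx => ∑ jdx : (i : Fin d) → Fin (m i), (∏ k, M k (idx k) (jdx k)) * B jdx

/-- The mode-`k` unfolding of a tensor, as a matrix whose columns are indexed by the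
multi-indices over the remaining modes (ordered column-major via `⟨i⟩` in the paper). -/
def unfold {d : ℕ} {n : Fin d → ℕ} (k : Fin d) (A : ((i : Fin d) → Fin (n i)) → ℝ) :
    Matrix (Fin (n k)) ((i : {i : Fin d // i ≠ k}) → Fin (n i)) ℝ :=
  Matrix.of fun a c =>
    A fun i => if h : i = k then Fin.cast (congrArg n h).symm a else c ⟨i, h⟩


private lemma liftMat_eq_submatrix {a b s c e : ℕ} (h₁ : a * s = c) (h₂ : b * s = e)
    (U : Matrix (Fin a) (Fin b) ℝ) :
    liftMat s h₁ h₂ U = (U ⊗ₖ (1 : Matrix (Fin s) (Fin s) ℝ)).submatrix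
      ⇑(finProdFinEquiv.trans (finCongr h₁)).symm ⇑(finProdFinEquiv.trans (finCongr h₂)).symm := by
  rfl

private lemma liftMat_transpose {a b s c e : ℕ} (h₁ : a * s = c) (h₂ : b * s = e)
    (U : Matrix (Fin a) (Fin b) ℝ) :
    liftMat s h₂ h₁ Uᵀ = (liftMat s h₁ h₂ U)ᵀ := by
  ext i j
  simp [liftMat, kronI, Matrix.one_apply, eq_comm]

private lemma liftMat_mul {a s c : ℕ} (h : a * s = c) (U V : Matrix (Fin a) (Fin a) ℝ) :
    liftMat s h h U * liftMat s h h V = liftMat s h h (U * V) := by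
  rw [liftMat_eq_submatrix, liftMat_eq_submatrix, liftMat_eq_submatrix,
    Matrix.submatrix_mul_equiv, ← Matrix.mul_kronecker_mul, Matrix.one_mul]

private lemma liftMat_one {a s c : ℕ} (h : a * s = c) :
    liftMat s h h (1 : Matrix (Fin a) (Fin a) ℝ) = 1 := by
  rw [liftMat_eq_submatrix, Matrix.one_kronecker_one, Matrix.submatrix_one_equiv]

def splitEquiv {d : ℕ} {n : Fin d → ℕ} (k : Fin d) :
    ((i : Fin d) → Fin (n i)) ≃ (Fin (n k) × ((i : {i : Fin d // i ≠ k}) → Fin (n i))) where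
  toFun jdx := (jdx k, fun i => jdx i)
  invFun p := fun i => if h : i = k then Fin.cast (congrArg n h).symm p.1 else p.2 ⟨i, h⟩
  left_inv jdx := by
    funext i
    by_cases h : i = k
    · subst h; simp
    · simp [h]
  right_inv p := by
    ext
    · simp
    · next i => simp [i.2]

private lemma prod_split {d : ℕ} (k : Fin d) (g : (i : Fin d) → ℝ) :
    ∏ i, g i = g k * ∏ i : {i : Fin d // i ≠ k}, g i.1 := by
  rw [Fintype.prod_eq_mul_prod_compl k g]
  congr 1
  exact Finset.prod_subtype _ (by simp) g

/-- core unfolding formula for the HOSVD-STP: if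
`ℬ = 𝒜 ⋉₁ U⁽¹⁾ᵀ ⋯ ⋉_d U⁽ᵈ⁾ᵀ` with orthogonal `U⁽ᵏ⁾ ∈ ℝ^{(n_k/s_k)×(n_k/s_k)}`, then
`ℬ₍ₖ₎ = Û⁽ᵏ⁾ᵀ 𝒜₍ₖ₎ Π⁽⁻ᵏ⁾` where `Û⁽ᵏ⁾ = U⁽ᵏ⁾ ⊗ I_{s_k}` and
`Π⁽⁻ᵏ⁾ = Û⁽ᵈ⁾ ⊗ ⋯ ⊗ Û⁽ᵏ⁺¹⁾ ⊗ Û⁽ᵏ⁻¹⁾ ⊗ ⋯ ⊗ Û⁽¹⁾` (realized on column-major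
multi-indices as the matrix with `(c,c')` entry `∏_{i≠k} Û⁽ⁱ⁾ (c i) (c' i)`), and
consequently `ℬ₍ₖ₎ ℬ₍ₖ₎ᵀ = Û⁽ᵏ⁾ᵀ 𝒜₍ₖ₎ 𝒜₍ₖ₎ᵀ Û⁽ᵏ⁾`. -/
theorem hosvd_stp_core_unfold {d : ℕ} {n s nq : Fin d → ℕ}
    (hn : ∀ k, nq k * s k = n k)
    (U : (k : Fin d) → Matrix (Fin (nq k)) (Fin (nq k)) ℝ)
    (horth : ∀ k, (U k)ᵀ * U k = 1) (horth' : ∀ k, U k * (U k)ᵀ = 1)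
    (A B : ((i : Fin d) → Fin (n i)) → ℝ)
    (hB : B = tucker (fun k => liftMat (s k) (hn k) (hn k) (U k)ᵀ) A) (k : Fin d) :
    unfold k B =
        (liftMat (s k) (hn k) (hn k) (U k))ᵀ * unfold k A *
          Matrix.of (fun (c c' : (i : {i : Fin d // i ≠ k}) → Fin (n i)) =>
            ∏ i : {i : Fin d // i ≠ k},
              liftMat (s i) (hn i) (hn i) (U i) (c i) (c' i)) ∧
      unfold k B * (unfold k B)ᵀ =
        (liftMat (s k) (hn k) (hn k) (U k))ᵀ * (unfold k A * (unfold k A)ᵀ) *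
          liftMat (s k) (hn k) (hn k) (U k) := by
  have key : unfold k B =
      (liftMat (s k) (hn k) (hn k) (U k))ᵀ * unfold k A *
        Matrix.of (fun (c c' : (i : {i : Fin d // i ≠ k}) → Fin (n i)) =>
          ∏ i : {i : Fin d // i ≠ k},
            liftMat (s i) (hn i) (hn i) (U i) (c i) (c' i)) := by
    subst hB
    ext a c
    simp only [Matrix.mul_apply, unfold, tucker, Matrix.of_apply]
    rw [← Equiv.sum_comp (splitEquiv k).symm, Fintype.sum_prod_type, Finset.sum_comm]
    refine Finset.sum_congr rfl fun c' _ => ?_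
    rw [Finset.sum_mul]
    refine Finset.sum_congr rfl fun j _ => ?_
    rw [prod_split k]
    have h1 : (splitEquiv (n := n) k).symm (j, c') =
        fun i => if h : i = k then Fin.cast (congrArg n h).symm j else c' ⟨i, h⟩ := rfl
    rw [h1]
    simp only [dif_pos rfl]
    rw [liftMat_transpose]
    have h2 : ∀ i : {i : Fin d // i ≠ k},
        liftMat (s i) (hn i) (hn i) (U i)ᵀ
          ((if h : (i : Fin d) = k then Fin.cast (congrArg n h).symm a else c ⟨i, h⟩))
          ((if h : (i : Fin d) = k then Fin.cast (congrArg n h).symm j else c' ⟨i, h⟩)) =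
        liftMat (s i) (hn i) (hn i) (U i) (c' i) (c i) := by
      intro i
      rw [dif_neg i.2, dif_neg i.2, liftMat_transpose]
      rfl
    rw [Finset.prod_congr rfl fun i _ => h2 i]
    simp only [dite_true, Fin.cast_eq_self]
    ring
  have hP : (Matrix.of (fun (c c' : (i : {i : Fin d // i ≠ k}) → Fin (n i)) =>
        ∏ i : {i : Fin d // i ≠ k}, liftMat (s i) (hn i) (hn i) (U i) (c i) (c' i))) *
      (Matrix.of (fun (c c' : (i : {i : Fin d // i ≠ k}) → Fin (n i)) =>
        ∏ i : {i : Fin d // i ≠ k},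
          liftMat (s i) (hn i) (hn i) (U i) (c i) (c' i)))ᵀ = 1 := by
    have hUU : ∀ i : Fin d, liftMat (s i) (hn i) (hn i) (U i) *
        (liftMat (s i) (hn i) (hn i) (U i))ᵀ = 1 := by
      intro i
      rw [← liftMat_transpose, liftMat_mul, horth', liftMat_one]
    ext c c''
    simp only [Matrix.mul_apply, Matrix.transpose_apply, Matrix.of_apply]
    have hd : ∀ c' : (i : {i : Fin d // i ≠ k}) → Fin (n i),
        (∏ i : {i : Fin d // i ≠ k}, liftMat (s i) (hn i) (hn i) (U i) (c i) (c' i)) *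
          ∏ i : {i : Fin d // i ≠ k}, liftMat (s i) (hn i) (hn i) (U i) (c'' i) (c' i) =
        ∏ i : {i : Fin d // i ≠ k}, (liftMat (s i) (hn i) (hn i) (U i) (c i) (c' i) *
          liftMat (s i) (hn i) (hn i) (U i) (c'' i) (c' i)) := fun c' =>
      (Finset.prod_mul_distrib).symm
    rw [Finset.sum_congr rfl fun c' _ => hd c']
    rw [← Fintype.piFinset_univ,
      ← Finset.prod_univ_sum (fun _ => (Finset.univ : Finset (Fin (n _))))
        (fun (i : {i : Fin d // i ≠ k}) j => liftMat (s i) (hn i) (hn i) (U i) (c i) j *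
          liftMat (s i) (hn i) (hn i) (U i) (c'' i) j)]
    have h2 : ∀ i : {i : Fin d // i ≠ k},
        (∑ j, liftMat (s i) (hn i) (hn i) (U i) (c i) j *
          liftMat (s i) (hn i) (hn i) (U i) (c'' i) j) =
        (1 : Matrix (Fin (n i)) (Fin (n i)) ℝ) (c i) (c'' i) := by
      intro i
      rw [← hUU i]
      simp [Matrix.mul_apply]
    rw [Finset.prod_congr rfl fun i _ => h2 i]
    by_cases h : c = c''
    · subst h; simp [Matrix.one_apply]
    · have : ∃ i, c i ≠ c'' i := by
        by_contra hno
        push_neg at hno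
        exact h (funext hno)
      obtain ⟨i, hi⟩ := this
      rw [Matrix.one_apply_ne h, Finset.prod_eq_zero (Finset.mem_univ i)]
      rw [Matrix.one_apply_ne hi]
  refine ⟨key, ?_⟩
  rw [key, Matrix.transpose_mul, Matrix.transpose_mul, Matrix.transpose_transpose]
  rw [← Matrix.mul_assoc, Matrix.mul_assoc ((liftMat (s k) (hn k) (hn k) (U k))ᵀ * unfold k A),
    hP, Matrix.mul_one]
  rw [← Matrix.mul_assoc, Matrix.mul_assoc (liftMat (s k) (hn k) (hn k) (U k))ᵀ]
end
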